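/- arXiv:0802.0889 — 4 statements merged into one kernel-verified Lean document; each statement's English description precedes it below -/
import Mathlib

section
/- In SL_3(ℝ), with y_1(a) = I + a·E_{21} and y_2(a) = I + a·E_{32} (elementary lower-triangular matrices), for all real a, b, c with a + c ≠ 0 one has y_1(a) y_2(b) y_1(c) = y_2(bc/(a+c)) y_1(a+c) y_2(ab/(a+c)). -/
/-- `y₁ a = I + a·E₂₁` in `SL₃(ℝ)` (as a 3×3 matrix; it has determinant 1). -/
noncomputable def y1 (a : ℝ) : Matrix (Fin 3) (Fin 3) ℝ :=
  1 + a • Matrix.single 1 0 1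

/-- `y₂ a = I + a·E₃₂` in `SL₃(ℝ)`. -/
noncomputable def y2 (a : ℝ) : Matrix (Fin 3) (Fin 3) ℝ :=
  1 + a • Matrix.single 2 1 1

theorem braid_move_yyy (a b c : ℝ) (h : a + c ≠ 0) :
    y1 a * y2 b * y1 c =
      y2 (b * c / (a + c)) * y1 (a + c) * y2 (a * b / (a + c)) := by
  unfold y1 y2
  ext i j
  fin_cases i <;> fin_cases j <;>
    simp [Matrix.mul_apply, Fin.sum_univ_succ, Matrix.single, Matrix.one_apply] <;>
    field_simp <;> ring
end

section
/- For any real a > 0 and any i with 1 ≤ i ≤ n-1, every minor of the n×n matrix y_i(a) = I + a·E_{i+1,i} is nonnegative. Consequently, for any sequence i_1,...,i_m and positive reals t_1,...,t_m, all minors of the product y_{i_1}(t_1) ⋯ y_{i_m}(t_m) are nonnegative. -/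
/-- A square real matrix is totally nonnegative if all of its minors (of all sizes)
are nonnegative. -/
def TotallyNonneg {n : ℕ} (A : Matrix (Fin n) (Fin n) ℝ) : Prop :=
  ∀ (k : ℕ) (r c : Fin k → Fin n), StrictMono r → StrictMono c →
    0 ≤ (A.submatrix r c).det

/-- The `n×n` real matrix unit `E r c` (indices `0`-based). -/
def matUnit (n r c : ℕ) : Matrix (Fin n) (Fin n) ℝ :=
  Matrix.of fun p q => if p.val = r ∧ q.val = c then (1 : ℝ) else 0

/-- `y_i a = I + a·E_{i+1,i}` (indices `0`-based). -/
noncomputable def yElem (n i : ℕ) (a : ℝ) : Matrix (Fin n) (Fin n) ℝ :=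
  1 + a • matUnit n (i + 1) i

namespace TNNAux

open Equiv Equiv.Perm Finset Function Matrix

local notation "ε " σ:arg => ((Equiv.Perm.sign σ : ℤ) : ℝ)

/-- A minor of the identity is nonnegative. -/
lemma det_one_submatrix_nonneg {n k : ℕ} {f g : Fin k → Fin n}
    (hf : Monotone f) (hg : StrictMono g) :
    0 ≤ ((1 : Matrix (Fin n) (Fin n) ℝ).submatrix f g).det := by
  by_cases hinj : Function.Injective f
  · have hf' : StrictMono f := fun x y hxy => lt_of_le_of_ne (hf hxy.le) (fun h => absurd (hinj h) (ne_of_lt hxy))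
    by_cases hr : Set.range f = Set.range g
    · have hfg : f = g := (hf'.range_inj hg).1 hr
      subst hfg
      rw [Matrix.submatrix_one f hinj]
      simp
    · -- ranges differ; since both have cardinality k, range f is not contained in range g
      have hcard : (Finset.univ.image f).card = (Finset.univ.image g).card := by
        rw [Finset.card_image_of_injective _ hinj, Finset.card_image_of_injective _ hg.injective]
      have hsub : ¬ (Finset.univ.image f ⊆ Finset.univ.image g) := by
        intro hss
        apply hr
        have : (Finset.univ.image f) = (Finset.univ.image g) :=
          Finset.eq_of_subset_of_card_le hss hcard.ge
        have h2 := congrArg (fun s : Finset (Fin n) => (s : Set (Fin n))) this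
        simpa [Finset.coe_image, Set.image_univ] using h2
      obtain ⟨x, hxf, hxg⟩ := Finset.not_subset.1 hsub
      obtain ⟨j, _, rfl⟩ := Finset.mem_image.1 hxf
      apply le_of_eq
      symm
      apply Matrix.det_eq_zero_of_row_eq_zero j
      intro l
      simp only [Matrix.submatrix_apply, Matrix.one_apply]
      rw [if_neg]
      intro h
      exact hxg (Finset.mem_image.2 ⟨l, Finset.mem_univ _, h.symm⟩)
  · -- two equal rows
    simp only [Function.Injective] at hinj
    push_neg at hinj
    obtain ⟨j, j', hjj', hne⟩ := hinj
    apply le_of_eq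
    symm
    apply Matrix.det_zero_of_row_eq hne
    funext l
    simp only [Matrix.submatrix_apply]
    rw [hjj']

/-- Every minor of `yElem n i a` with `a ≥ 0` is nonnegative. -/
lemma yElem_minor_nonneg {n : ℕ} (i : ℕ) (a : ℝ) (hi : i + 1 < n) (ha : 0 ≤ a)
    {k : ℕ} (r c : Fin k → Fin n) (hr : StrictMono r) (hc : StrictMono c) :
    0 ≤ ((yElem n i a).submatrix r c).det := by
  by_cases hex : (∃ j, (r j : ℕ) = i + 1) ∧ (∃ l, (c l : ℕ) = i)
  · obtain ⟨⟨j0, hj0⟩, ⟨l0, hl0⟩⟩ := hex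
    set M : Matrix (Fin k) (Fin k) ℝ := (1 : Matrix (Fin n) (Fin n) ℝ).submatrix r c with hM
    have hB : (yElem n i a).submatrix r c
        = M.updateRow j0 (M j0 + a • (Pi.single l0 1 : Fin k → ℝ)) := by
      funext j l
      by_cases hj : j = j0
      · subst hj
        simp only [Matrix.updateRow_self, yElem, matUnit, Matrix.submatrix_apply,
          Matrix.add_apply, Matrix.smul_apply, Matrix.of_apply, Pi.add_apply, Pi.smul_apply,
          smul_eq_mul, hM]
        congr 1
        by_cases hl : l = l0
        · subst hl
          rw [if_pos ⟨hj0, hl0⟩, Pi.single_eq_same, mul_one]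
        · rw [if_neg, Pi.single_eq_of_ne hl, mul_zero]
          rintro ⟨-, h2⟩
          exact hl (hc.injective (Fin.ext (h2.trans hl0.symm)))
      · rw [Matrix.updateRow_ne hj]
        simp only [yElem, matUnit, Matrix.submatrix_apply, Matrix.add_apply,
          Matrix.smul_apply, Matrix.of_apply, smul_eq_mul, hM]
        rw [if_neg, mul_zero, add_zero]
        rintro ⟨h1, -⟩
        exact hj (hr.injective (Fin.ext (h1.trans hj0.symm)))
    rw [hB, Matrix.det_updateRow_add, Matrix.updateRow_eq_self, Matrix.det_updateRow_smul]
    have hMnn : 0 ≤ M.det := det_one_submatrix_nonneg hr.monotone hc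
    have hin : i < n := lt_trans (Nat.lt_succ_self i) hi
    have hM' : M.updateRow j0 (Pi.single l0 1 : Fin k → ℝ)
        = (1 : Matrix (Fin n) (Fin n) ℝ).submatrix (Function.update r j0 ⟨i, hin⟩) c := by
      funext j l
      by_cases hj : j = j0
      · subst hj
        simp only [Matrix.updateRow_self, Matrix.submatrix_apply, Function.update_self,
          Matrix.one_apply]
        by_cases hl : l = l0
        · subst hl
          rw [Pi.single_eq_same, if_pos]
          exact Fin.ext hl0.symm
        · rw [Pi.single_eq_of_ne hl, if_neg]
          intro h
          exact hl (hc.injective (Fin.ext ((congrArg Fin.val h).symm.trans hl0.symm)))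
      · rw [Matrix.updateRow_ne hj]
        simp only [Matrix.submatrix_apply, hM]
        rw [Function.update_of_ne hj]
    have hmono : Monotone (Function.update r j0 (⟨i, hin⟩ : Fin n)) := by
      intro x y hxy
      rcases eq_or_lt_of_le hxy with rfl | hlt
      · exact le_rfl
      · rw [Function.update_apply, Function.update_apply]
        split_ifs with h1 h2 h3
        · exact le_rfl
        · have h4 := hr hlt
          rw [h1] at h4
          rw [Fin.le_def]
          have h5 : (r j0 : ℕ) < (r y : ℕ) := h4
          show i ≤ (r y : ℕ)
          omega
        · have h4 := hr hlt
          rw [h3] at h4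
          rw [Fin.le_def]
          have h5 : (r x : ℕ) < (r j0 : ℕ) := h4
          show (r x : ℕ) ≤ i
          omega
        · exact (hr hlt).le
    have hM'nn : 0 ≤ (M.updateRow j0 (Pi.single l0 1 : Fin k → ℝ)).det := by
      rw [hM']
      exact det_one_submatrix_nonneg hmono hc
    have := mul_nonneg ha hM'nn
    linarith
  · have heq : (yElem n i a).submatrix r c = (1 : Matrix (Fin n) (Fin n) ℝ).submatrix r c := by
      funext j l
      simp only [yElem, matUnit, Matrix.submatrix_apply, Matrix.add_apply,
        Matrix.smul_apply, Matrix.of_apply, smul_eq_mul]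
      rw [if_neg, mul_zero, add_zero]
      rintro ⟨h1, h2⟩
      exact hex ⟨⟨j, h1⟩, ⟨l, h2⟩⟩
    rw [heq]
    exact det_one_submatrix_nonneg hr.monotone hc


lemma det_mul_aux' {k n : ℕ} {M : Matrix (Fin k) (Fin n) ℝ} {N : Matrix (Fin n) (Fin k) ℝ}
    {p : Fin k → Fin n} (H : ¬Function.Injective p) :
    (∑ σ : Equiv.Perm (Fin k), ε σ * ∏ x, M (σ x) (p x) * N (p x) x) = 0 := by
  obtain ⟨i, j, hpij, hij⟩ : ∃ i j, p i = p j ∧ i ≠ j := by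
    rw [Function.Injective] at H
    push_neg at H
    exact H
  exact
    Finset.sum_involution (fun σ _ => σ * Equiv.swap i j)
      (fun σ _ => by
        have : (∏ x, M (σ x) (p x)) = ∏ x, M ((σ * Equiv.swap i j) x) (p x) :=
          Fintype.prod_equiv (swap i j) _ _ (by simp [apply_swap_eq_self hpij])
        simp [this, sign_swap hij, -sign_swap', Finset.prod_mul_distrib])
      (fun σ _ _ => (not_congr mul_swap_eq_iff).mpr hij) (fun _ _ => Finset.mem_univ _)
      fun σ _ => mul_swap_involutive i j σ

lemma sum_perm_eq_det_mul {k : ℕ} (M N : Matrix (Fin k) (Fin k) ℝ) :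
    ∑ τ : Perm (Fin k), ∑ σ : Perm (Fin k), ε σ * ∏ i, M (σ i) (τ i) * N (τ i) i
      = M.det * N.det :=
  calc
    ∑ τ : Perm (Fin k), ∑ σ : Perm (Fin k), ε σ * ∏ i, M (σ i) (τ i) * N (τ i) i
        = ∑ σ : Perm (Fin k), ∑ τ : Perm (Fin k),
            (∏ i, N (σ i) i) * ε τ * ∏ j, M (τ j) (σ j) := by
      simp only [mul_comm, mul_left_comm, prod_mul_distrib, mul_assoc]
    _ = ∑ σ : Perm (Fin k), ∑ τ : Perm (Fin k),
            (∏ i, N (σ i) i) * (ε σ * ε τ) * ∏ i, M (τ i) i :=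
      (sum_congr rfl fun σ _ =>
        Fintype.sum_equiv (Equiv.mulRight σ⁻¹) _ _ fun τ => by
          have : (∏ j, M (τ j) (σ j)) = ∏ j, M ((τ * σ⁻¹) j) j := by
            rw [← (σ⁻¹ : _ ≃ _).prod_comp]
            simp only [Equiv.Perm.coe_mul, Equiv.Perm.inv_def, Equiv.apply_symm_apply, Function.comp_apply]
          have h : ε σ * ε (τ * σ⁻¹) = ε τ :=
            calc
              ε σ * ε (τ * σ⁻¹) = ε (τ * σ⁻¹ * σ) := by
                rw [mul_comm, sign_mul (τ * σ⁻¹)]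
                simp only [Int.cast_mul, Units.val_mul]
              _ = ε τ := by simp only [inv_mul_cancel_right]
          simp_rw [Equiv.coe_mulRight, h]
          simp only [this])
    _ = M.det * N.det := by
      simp only [det_apply', Finset.mul_sum, mul_comm, mul_left_comm, mul_assoc]

lemma det_mul_rect_nonneg {k n : ℕ} (A : Matrix (Fin k) (Fin n) ℝ) (B : Matrix (Fin n) (Fin k) ℝ)
    (hA : ∀ s : Fin k → Fin n, StrictMono s → 0 ≤ (A.submatrix id s).det)
    (hB : ∀ s : Fin k → Fin n, StrictMono s → 0 ≤ (B.submatrix s id).det) :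
    0 ≤ (A * B).det := by
  classical
  have step1 : (A * B).det
      = ∑ p : Fin k → Fin n, ∑ σ : Perm (Fin k), ε σ * ∏ x, A (σ x) (p x) * B (p x) x := by
    simp only [det_apply', Matrix.mul_apply, Finset.prod_univ_sum, Finset.mul_sum,
      Fintype.piFinset_univ]
    rw [Finset.sum_comm]
  have step2 : (A * B).det
      = ∑ p ∈ Finset.univ.filter (fun p : Fin k → Fin n => Function.Injective p),
          ∑ σ : Perm (Fin k), ε σ * ∏ x, A (σ x) (p x) * B (p x) x := by
    rw [step1]
    refine (Finset.sum_subset (Finset.filter_subset _ _) fun p _ hp => det_mul_aux' ?_).symm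
    simpa using hp
  rw [step2, ← Finset.sum_fiberwise_of_maps_to
      (g := fun p : Fin k → Fin n => Finset.univ.image p)
      (t := Finset.univ.filter fun T : Finset (Fin n) => T.card = k) ?_]
  swap
  · intro p hp
    simp only [Finset.mem_filter, Finset.mem_univ, true_and] at hp ⊢
    rw [Finset.card_image_of_injective _ hp, Finset.card_univ, Fintype.card_fin]
  refine Finset.sum_nonneg fun T hT => ?_
  simp only [Finset.mem_filter, Finset.mem_univ, true_and] at hT
  set s : Fin k → Fin n := fun j => T.orderEmbOfFin hT j with hs
  have hsmono : StrictMono s := (T.orderEmbOfFin hT).strictMono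
  have hrange : Finset.univ.image s = T := by
    apply Finset.coe_injective
    rw [Finset.coe_image, Finset.coe_univ, Set.image_univ, hs]
    exact T.range_orderEmbOfFin hT
  have himage : (Finset.univ.filter (fun p : Fin k → Fin n => Function.Injective p)).filter
        (fun p => Finset.univ.image p = T)
      = Finset.univ.image (fun τ : Perm (Fin k) => s ∘ τ) := by
    ext p
    simp only [Finset.mem_filter, Finset.mem_univ, true_and, Finset.mem_image]
    constructor
    · rintro ⟨hp, hpT⟩
      have hmem : ∀ j, p j ∈ T := fun j => by
        rw [← hpT]; exact Finset.mem_image_of_mem _ (Finset.mem_univ j)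
      set u : Fin k → Fin k := fun j => (T.orderIsoOfFin hT).symm ⟨p j, hmem j⟩ with hu
      have hsu : ∀ j, s (u j) = p j := fun j => by
        rw [hs]
        show (T.orderEmbOfFin hT) (u j) = p j
        rw [← Finset.coe_orderIsoOfFin_apply T hT, hu]
        simp
      have huinj : Function.Injective u := fun a b hab => hp (by rw [← hsu a, ← hsu b, hab])
      have hubij : Function.Bijective u := Finite.injective_iff_bijective.mp huinj
      exact ⟨Equiv.ofBijective u hubij, funext fun j => hsu j⟩
    · rintro ⟨τ, rfl⟩
      refine ⟨hsmono.injective.comp τ.injective, ?_⟩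
      rw [← Finset.image_image (g := s) (f := τ)]
      rw [Finset.image_univ_equiv τ, hrange]
  rw [himage, Finset.sum_image (by
    intro τ _ τ' _ h
    exact Equiv.ext fun j => hsmono.injective (congrFun h j))]
  have hfinal : ∑ τ : Perm (Fin k),
      ∑ σ : Perm (Fin k), ε σ * ∏ x, A (σ x) ((s ∘ τ) x) * B ((s ∘ τ) x) x
      = (A.submatrix id s).det * (B.submatrix s id).det := by
    rw [← sum_perm_eq_det_mul]
    rfl
  rw [hfinal]
  exact mul_nonneg (hA s hsmono) (hB s hsmono)

lemma totallyNonneg_one {n : ℕ} : TotallyNonneg (1 : Matrix (Fin n) (Fin n) ℝ) :=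
  fun _ _ _ hr hc => det_one_submatrix_nonneg hr.monotone hc

lemma totallyNonneg_mul {n : ℕ} {A B : Matrix (Fin n) (Fin n) ℝ}
    (hA : TotallyNonneg A) (hB : TotallyNonneg B) : TotallyNonneg (A * B) := by
  intro k r c hr hc
  rw [← Matrix.submatrix_mul_equiv A B r (Equiv.refl (Fin n)) c, Equiv.coe_refl]
  apply det_mul_rect_nonneg
  · intro s hsm
    rw [Matrix.submatrix_submatrix]
    simpa using hA k r s hr hsm
  · intro s hsm
    rw [Matrix.submatrix_submatrix]
    simpa using hB k s c hsm hc

end TNNAux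

theorem yElem_totallyNonneg (n : ℕ) :
    (∀ (i : ℕ) (a : ℝ), i + 1 < n → 0 < a → TotallyNonneg (yElem n i a)) ∧
    (∀ (m : ℕ) (idx : Fin m → ℕ) (t : Fin m → ℝ),
      (∀ k, idx k + 1 < n) → (∀ k, 0 < t k) →
      TotallyNonneg (List.ofFn fun k => yElem n (idx k) (t k)).prod) := by
  constructor
  · intro i a hi ha k r c hr hc
    exact TNNAux.yElem_minor_nonneg i a hi ha.le r c hr hc
  · intro m
    induction m with
    | zero =>
      intro idx t _ _
      simpa using TNNAux.totallyNonneg_one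
    | succ m ih =>
      intro idx t hidx ht
      rw [List.ofFn_succ, List.prod_cons]
      have hy : TotallyNonneg (yElem n (idx 0) (t 0)) := fun k r c hr hc =>
        TNNAux.yElem_minor_nonneg _ _ (hidx 0) (ht 0).le r c hr hc
      exact TNNAux.totallyNonneg_mul hy
        (ih (fun k => idx k.succ) (fun k => t k.succ) (fun k => hidx k.succ)
          (fun k => ht k.succ))
end

section
/- Let (W, S) be a finite Coxeter group, w ∈ W with reduced word w = s_{i_1} ⋯ s_{i_m}, and v ≤ w in Bruhat order. Then there exists a subexpression s_{i_{j_1}} ⋯ s_{i_{j_k}} (with j_1 < ... < j_k) equal to v such that for each l = 0, 1, ..., k we have s_{i_{j_1}} ⋯ s_{i_{j_l}} s_{i_r} > s_{i_{j_1}} ⋯ s_{i_{j_l}} in Bruhat order whenever j_l < r ≤ j_{l+1} (with the conventions j_0 = 0 and j_{k+1} = m). -/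
namespace CoxeterSystem

variable {B : Type*} {W : Type*} [Group W] {M : CoxeterMatrix B}

/-- Bruhat order on a Coxeter group, via the subword property: `v ≤ w` iff some
reduced word for `w` contains a subword whose product is `v`. -/
def BruhatLE (cs : CoxeterSystem M W) (v w : W) : Prop :=
  ∃ ω : List B, cs.IsReduced ω ∧ cs.wordProd ω = w ∧
    ∃ ω' : List B, ω'.Sublist ω ∧ cs.wordProd ω' = v

/-- Strict Bruhat order. -/
def BruhatLT (cs : CoxeterSystem M W) (v w : W) : Prop :=
  cs.BruhatLE v w ∧ v ≠ w

end CoxeterSystem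

open CoxeterSystem

set_option linter.unusedSectionVars false
set_option maxHeartbeats 1000000


open List

namespace PosSub

/-- Semidirect product `W ⋉ (W → ZMod 2)` used to track inversion counts mod 2. -/
@[ext]
structure SD (W : Type*) where
  el : W
  fn : W → ZMod 2

lemma zmod2 (x : ZMod 2) : x + x = 0 := by
  fin_cases x <;> rfl

namespace SD

variable {W : Type*} [Group W]

instance : One (SD W) := ⟨⟨1, fun _ => 0⟩⟩
instance : Mul (SD W) := ⟨fun a b => ⟨a.el * b.el, fun t => a.fn (b.el * t * b.el⁻¹) + b.fn t⟩⟩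
instance : Inv (SD W) := ⟨fun a => ⟨a.el⁻¹, fun t => a.fn (a.el⁻¹ * t * a.el)⟩⟩

@[simp] lemma one_el : (1 : SD W).el = 1 := rfl
@[simp] lemma one_fn (t : W) : (1 : SD W).fn t = 0 := rfl
@[simp] lemma mul_el (a b : SD W) : (a * b).el = a.el * b.el := rfl
@[simp] lemma mul_fn (a b : SD W) (t : W) :
    (a * b).fn t = a.fn (b.el * t * b.el⁻¹) + b.fn t := rfl
@[simp] lemma inv_el (a : SD W) : (a⁻¹).el = a.el⁻¹ := rfl
@[simp] lemma inv_fn (a : SD W) (t : W) : (a⁻¹).fn t = a.fn (a.el⁻¹ * t * a.el) := rfl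

instance : Group (SD W) where
  mul_assoc a b c := by
    ext t
    · simp [mul_assoc]
    · simp only [mul_fn, mul_el, mul_inv_rev]
      rw [add_assoc]
      congr 2
      group
  one_mul a := by ext t <;> simp
  mul_one a := by ext t <;> simp
  inv_mul_cancel a := by
    ext t
    · simp
    · simp only [mul_fn, inv_fn, inv_el, one_fn]
      have : a.el⁻¹ * (a.el * t * a.el⁻¹) * a.el = t := by group
      rw [this, zmod2]

end SD

variable {B : Type*} {W : Type*} [Group W] [DecidableEq W] {M : CoxeterMatrix B}
variable (cs : CoxeterSystem M W)

local prefix:100 "ℓ" => cs.length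
local prefix:100 "π" => cs.wordProd
local prefix:100 "σ" => cs.simple

/-- The generator images in the semidirect product. -/
def phi (i : B) : SD W := ⟨cs.simple i, fun t => if t = cs.simple i then 1 else 0⟩

lemma ris_cons (i : B) (ω : List B) :
    cs.rightInvSeq (i :: ω) = ((π ω)⁻¹ * σ i * π ω) :: cs.rightInvSeq ω := rfl

lemma prod_phi : ∀ ω : List B,
    ((ω.map (phi cs)).prod : SD W) = ⟨π ω, fun t => ((cs.rightInvSeq ω).count t : ZMod 2)⟩ := by
  intro ω
  induction ω with
  | nil => ext t <;> simp
  | cons i ω ih =>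
    rw [List.map_cons, List.prod_cons, ih]
    ext t
    · simp [phi, cs.wordProd_cons]
    · show (phi cs i).fn ((π ω) * t * (π ω)⁻¹) + _ = _
      dsimp only
      rw [ris_cons, List.count_cons]
      have hiff : ((π ω) * t * (π ω)⁻¹ = σ i) ↔ ((π ω)⁻¹ * σ i * (π ω) = t) := by
        constructor <;> intro h <;> rw [← h] <;> group
      simp only [phi]
      by_cases hc : (π ω)⁻¹ * σ i * (π ω) = t
      · rw [if_pos (hiff.mpr hc), if_pos (by simpa using hc)]
        push_cast
        ring
      · rw [if_neg (fun h => hc (hiff.mp h)), if_neg (by simpa using hc)]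
        push_cast
        ring

lemma key_comm (i i' : B) : ∀ k : ℕ,
    ((σ i * σ i') ^ k)⁻¹ * σ i' = σ i' * (σ i * σ i') ^ k := by
  intro k
  induction k with
  | zero => simp
  | succ k ih =>
    have h2 : (σ i * σ i')⁻¹ * σ i' = σ i' * (σ i * σ i') := by
      rw [mul_inv_rev, cs.inv_simple, cs.inv_simple, mul_assoc]
    calc ((σ i * σ i') ^ (k + 1))⁻¹ * σ i'
        = (σ i * σ i')⁻¹ * (((σ i * σ i') ^ k)⁻¹ * σ i') := by
          rw [pow_succ, mul_inv_rev, mul_assoc]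
      _ = (σ i * σ i')⁻¹ * (σ i' * (σ i * σ i') ^ k) := by rw [ih]
      _ = ((σ i * σ i')⁻¹ * σ i') * (σ i * σ i') ^ k := by rw [mul_assoc]
      _ = (σ i' * (σ i * σ i')) * (σ i * σ i') ^ k := by rw [h2]
      _ = σ i' * (σ i * σ i') ^ (k + 1) := by rw [mul_assoc, ← pow_succ']

lemma ris_alt (i i' : B) : ∀ n : ℕ,
    cs.rightInvSeq (alternatingWord i i' n)
      = ((List.range n).reverse).map (fun j => σ i' * (σ i * σ i') ^ j) := by
  intro n
  induction n with
  | zero => simp [alternatingWord]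
  | succ n ih =>
    rw [alternatingWord_succ' i i' n]
    rw [ris_cons, ih, List.range_succ, List.reverse_append]
    simp only [List.reverse_singleton, List.singleton_append, List.map_cons]
    congr 1
    rcases Nat.even_or_odd n with he | ho
    · obtain ⟨k, hk⟩ := he
      have hc : (if Even n then i' else i) = i' := if_pos ⟨k, hk⟩
      rw [hc, cs.prod_alternatingWord_eq_mul_pow, if_pos ⟨k, hk⟩, one_mul]
      have hn2 : n / 2 = k := by omega
      rw [hn2, key_comm, hk, pow_add, mul_assoc]
    · obtain ⟨k, hk⟩ := ho
      have hne : ¬ Even n := by simp [hk, parity_simps]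
      have hc : (if Even n then i' else i) = i := if_neg hne
      rw [hc, cs.prod_alternatingWord_eq_mul_pow, if_neg hne]
      have hn2 : n / 2 = k := by omega
      rw [hn2, mul_inv_rev, cs.inv_simple, key_comm,
        show n = k + 1 + k by omega, pow_add, pow_succ]
      group

lemma alt_two_mul_succ (i i' : B) (m : ℕ) :
    alternatingWord i i' (2 * (m + 1)) = i :: i' :: alternatingWord i i' (2 * m) := by
  have h1 : 2 * (m + 1) = (2 * m + 1) + 1 := by ring
  rw [h1, alternatingWord_succ', alternatingWord_succ']
  have h2 : ¬ Even (2 * m + 1) := by simp [parity_simps]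
  have h3 : Even (2 * m) := ⟨m, by ring⟩
  rw [if_neg h2, if_pos h3]

lemma map_prod_alt {G : Type*} [Monoid G] (f : B → G) (i i' : B) : ∀ m : ℕ,
    ((alternatingWord i i' (2 * m)).map f).prod = (f i * f i') ^ m := by
  intro m
  induction m with
  | zero => simp [alternatingWord]
  | succ m ih =>
    rw [alt_two_mul_succ, List.map_cons, List.map_cons, List.prod_cons, List.prod_cons, ih,
      pow_succ']
    rw [mul_assoc]

lemma liftable : M.IsLiftable (phi cs) := by
  intro i i'
  rw [← map_prod_alt (phi cs) i i' (M i i'), prod_phi]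
  have h1 : π (alternatingWord i i' (2 * M i i')) = 1 := by
    rw [cs.prod_alternatingWord_eq_mul_pow, if_pos ⟨M i i', by ring⟩, one_mul,
      (by omega : 2 * M i i' / 2 = M i i'), cs.simple_mul_simple_pow]
  ext t
  · simpa using h1
  · show ((cs.rightInvSeq (alternatingWord i i' (2 * M i i'))).count t : ZMod 2) = 0
    rw [ris_alt, List.map_reverse, List.count_reverse, two_mul, List.range_add,
      List.map_append, List.count_append]
    have h2 : (List.range (M i i')).map
          ((fun j => σ i' * (σ i * σ i') ^ j) ∘ (fun x => M i i' + x))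
        = (List.range (M i i')).map (fun j => σ i' * (σ i * σ i') ^ j) := by
      apply List.map_congr_left
      intro j _
      show σ i' * (σ i * σ i') ^ (M i i' + j) = σ i' * (σ i * σ i') ^ j
      rw [pow_add, cs.simple_mul_simple_pow, one_mul]
    rw [List.map_map, h2]
    push_cast
    rw [zmod2]

/-- The parity homomorphism. -/
noncomputable def FF : W →* SD W := cs.lift ⟨phi cs, liftable cs⟩

lemma FF_simple (i : B) : FF cs (σ i) = phi cs i := cs.lift_apply_simple (liftable cs) i

lemma FF_wordProd (ω : List B) :
    FF cs (π ω) = ⟨π ω, fun t => ((cs.rightInvSeq ω).count t : ZMod 2)⟩ := by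
  rw [← prod_phi]
  unfold CoxeterSystem.wordProd
  rw [map_list_prod, List.map_map]
  congr 1
  apply List.map_congr_left
  intro i _
  exact FF_simple cs i

lemma FF_el (x : W) : (FF cs x).el = x := by
  obtain ⟨ω, rfl⟩ := cs.wordProd_surjective x
  rw [FF_wordProd]

lemma FF_fn_self {t : W} (ht : cs.IsReflection t) : (FF cs t).fn t = 1 := by
  obtain ⟨u, i, rfl⟩ := ht
  set t := u * σ i * u⁻¹ with htdef
  have key : u⁻¹ * t * u = σ i := by rw [htdef]; group
  rw [map_mul, map_mul, map_inv, FF_simple]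
  show (FF cs u * phi cs i).fn ((FF cs u)⁻¹.el * t * ((FF cs u)⁻¹.el)⁻¹) + (FF cs u)⁻¹.fn t = 1
  rw [SD.inv_el, FF_el, inv_inv, SD.inv_fn, FF_el, SD.mul_fn, key]
  show (FF cs u).fn ((phi cs i).el * σ i * ((phi cs i).el)⁻¹) + (phi cs i).fn (σ i) + _ = 1
  have hel : (phi cs i).el = σ i := rfl
  rw [hel, cs.inv_simple, cs.simple_mul_simple_cancel_right]
  show _ + (if σ i = σ i then (1 : ZMod 2) else 0) + _ = 1
  rw [if_pos rfl]
  have : ∀ a : ZMod 2, a + 1 + a = 1 := by decide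
  exact this _

theorem strong_exchange {ω : List B} (hω : cs.IsReduced ω) {t : W}
    (ht : cs.IsRightInversion (π ω) t) : t ∈ cs.rightInvSeq ω := by
  by_contra hmem
  have h0 : ((cs.rightInvSeq ω).count t : ZMod 2) = 0 := by
    rw [List.count_eq_zero.mpr hmem]; rfl
  obtain ⟨τ, hτred, hτ⟩ := cs.exists_reduced_word' (π ω * t)
  have hw : π ω = π τ * t := by
    rw [← hτ, mul_assoc, ht.1.mul_self, mul_one]
  have hτn : t ∉ cs.rightInvSeq τ := by
    intro hmem'
    have h2 := (cs.isRightInversion_of_mem_rightInvSeq hτred hmem').2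
    rw [← hτ, mul_assoc, ht.1.mul_self, mul_one] at h2
    exact Nat.lt_asymm ht.2 h2
  have h1 : (FF cs (π ω)).fn t = 1 := by
    rw [hw, map_mul, SD.mul_fn, FF_el]
    have harg : t * t * t⁻¹ = t := by group
    rw [harg, FF_wordProd, FF_fn_self cs ht.1]
    show ((cs.rightInvSeq τ).count t : ZMod 2) + 1 = 1
    rw [List.count_eq_zero.mpr hτn]
    simp
  rw [FF_wordProd] at h1
  have h1' : ((cs.rightInvSeq ω).count t : ZMod 2) = 1 := h1
  rw [h0] at h1'
  exact absurd h1' (by decide)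

theorem exchange {ω : List B} (hω : cs.IsReduced ω) {t : W}
    (ht : cs.IsRightInversion (π ω) t) :
    ∃ j, j < ω.length ∧ π (ω.eraseIdx j) = π ω * t := by
  obtain ⟨j, hj, hjt⟩ := List.mem_iff_getElem.mp (strong_exchange cs hω ht)
  rw [cs.length_rightInvSeq] at hj
  refine ⟨j, hj, ?_⟩
  rw [← cs.wordProd_mul_getD_rightInvSeq, List.getD_eq_getElem _ _ (by
    rw [cs.length_rightInvSeq]; exact hj), hjt]

lemma sublist_concat_cases {α : Type*} {τ l : List α} {a : α} (h : τ.Sublist (l ++ [a])) :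
    τ.Sublist l ∨ ∃ τ₁, τ = τ₁ ++ [a] ∧ τ₁.Sublist l := by
  have h' : τ.reverse.Sublist (a :: l.reverse) := by simpa using h.reverse
  rcases List.sublist_cons_iff.mp h' with h2 | ⟨r, hr, h2⟩
  · left
    simpa using h2.reverse
  · right
    refine ⟨r.reverse, ?_, by simpa using h2.reverse⟩
    rw [← List.reverse_reverse τ, hr]
    simp

/-- Deletion property: every word has a reduced sublist with the same product. -/
theorem exists_reduced_sublist : ∀ (n : ℕ) (ω : List B), ω.length ≤ n →
    ∃ τ : List B, τ.Sublist ω ∧ cs.IsReduced τ ∧ π τ = π ω := by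
  intro n
  induction n with
  | zero =>
    intro ω h
    rw [Nat.le_zero, List.length_eq_zero_iff] at h
    exact ⟨ω, List.Sublist.refl _, by simp [h, CoxeterSystem.IsReduced], rfl⟩
  | succ n ihn =>
    intro ω hlen
    by_cases hred : cs.IsReduced ω
    · exact ⟨ω, List.Sublist.refl _, hred, rfl⟩
    classical
    have hω0 : ω ≠ [] := by rintro rfl; exact hred (by simp [CoxeterSystem.IsReduced])
    have hωpos : 0 < ω.length := List.length_pos_iff.mpr hω0
    have hex : ∃ k, ¬ cs.IsReduced (ω.take (k + 1)) :=
      ⟨ω.length - 1, by rwa [Nat.sub_add_cancel hωpos, List.take_length]⟩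
    set k := Nat.find hex with hkdef
    have hk : ¬ cs.IsReduced (ω.take (k + 1)) := Nat.find_spec hex
    have hklt : k < ω.length := by
      have h9 : Nat.find hex ≤ ω.length - 1 :=
        Nat.find_le (by rwa [Nat.sub_add_cancel hωpos, List.take_length])
      omega
    have hkred : cs.IsReduced (ω.take k) := by
      rcases Nat.eq_zero_or_pos k with h0 | hpos
      · simp [h0, CoxeterSystem.IsReduced]
      · have := Nat.find_min hex (m := k - 1) (by omega)
        rw [not_not] at this
        rwa [show k - 1 + 1 = k by omega] at this
    set c := ω.get ⟨k, hklt⟩ with hcdef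
    have hsplit : ω.take (k + 1) = ω.take k ++ [c] := by
      rw [List.take_succ]
      congr 1
      rw [List.getElem?_eq_getElem hklt]
      rfl
    have hlen2 : ℓ (π (ω.take k)) = k := by
      have := hkred
      rwa [CoxeterSystem.IsReduced, List.length_take, min_eq_left hklt.le] at this
    have hdon : ℓ (π (ω.take k) * σ c) < ℓ (π (ω.take k)) := by
      rcases cs.length_mul_simple (π (ω.take k)) c with h | h
      · exfalso
        apply hk
        rw [CoxeterSystem.IsReduced, hsplit, cs.wordProd_append, cs.wordProd_singleton, h,
          List.length_append, List.length_take, min_eq_left hklt.le, List.length_singleton,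
          hlen2]
      · omega
    obtain ⟨j, hj, hjπ⟩ := exchange cs hkred ⟨cs.isReflection_simple c, hdon⟩
    set ω' := (ω.take k).eraseIdx j ++ ω.drop (k + 1) with hω'def
    have hπ : π ω' = π ω := by
      rw [hω'def, cs.wordProd_append, hjπ, ← cs.wordProd_singleton,
        ← cs.wordProd_append, ← hsplit, ← cs.wordProd_append, List.take_append_drop]
    have hsub : ω'.Sublist ω := by
      have h1 : ((ω.take k).eraseIdx j).Sublist (ω.take (k + 1)) := by
        refine (List.eraseIdx_sublist _ j).trans ?_
        rw [hsplit]
        exact List.sublist_append_left _ _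
      have h2 : ω'.Sublist (ω.take (k + 1) ++ ω.drop (k + 1)) :=
        List.Sublist.append h1 (List.Sublist.refl _)
      rwa [List.take_append_drop] at h2
    have hlen' : ω'.length ≤ n := by
      rw [hω'def, List.length_append]
      have h1 : ((ω.take k).eraseIdx j).length + 1 = (ω.take k).length :=
        List.length_eraseIdx_add_one hj
      have h2 : (ω.take k).length = k := by rw [List.length_take, min_eq_left hklt.le]
      have h3 : (ω.drop (k + 1)).length = ω.length - (k + 1) := List.length_drop
      omega
    obtain ⟨τ, ht1, ht2, ht3⟩ := ihn ω' hlen'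
    exact ⟨τ, ht1.trans hsub, ht2, ht3.trans hπ⟩

/-- The chain version of Bruhat order. -/
def CLE (v w : W) : Prop :=
  Relation.ReflTransGen (fun a b => ∃ t, cs.IsReflection t ∧ a = b * t ∧ ℓ a < ℓ b) v w

lemma cle_refl (w : W) : CLE cs w w := Relation.ReflTransGen.refl

lemma cle_trans {u v w : W} (h1 : CLE cs u v) (h2 : CLE cs v w) : CLE cs u w :=
  Relation.ReflTransGen.trans h1 h2

lemma cle_step_down {t : W} (ht : cs.IsReflection t) {w : W} (h : ℓ (w * t) < ℓ w) :
    CLE cs (w * t) w :=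
  Relation.ReflTransGen.single ⟨t, ht, rfl, h⟩

lemma cle_step_up {t : W} (ht : cs.IsReflection t) {w : W} (h : ℓ w < ℓ (w * t)) :
    CLE cs w (w * t) :=
  Relation.ReflTransGen.single ⟨t, ht, by rw [mul_assoc, ht.mul_self, mul_one], h⟩

lemma cle_length {v w : W} (h : CLE cs v w) : ℓ v ≤ ℓ w := by
  induction h with
  | refl => exact le_rfl
  | tail _ h2 ih =>
    obtain ⟨t, _, _, hlt⟩ := h2
    omega

lemma len_succ_of_lt {w : W} {i : B} (h : ℓ (w * σ i) < ℓ w) : ℓ (w * σ i) + 1 = ℓ w := by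
  rcases cs.length_mul_simple w i with h' | h' <;> omega

lemma len_succ_of_gt {w : W} {i : B} (h : ℓ w < ℓ (w * σ i)) : ℓ (w * σ i) = ℓ w + 1 := by
  rcases cs.length_mul_simple w i with h' | h' <;> omega

lemma len_lt_of_not_gt {w : W} {i : B} (h : ¬ ℓ (w * σ i) < ℓ w) : ℓ w < ℓ (w * σ i) := by
  rcases cs.length_mul_simple w i with h' | h' <;> omega

theorem master : ∀ n : ℕ,
    (∀ ω τ : List B, cs.IsReduced ω → ω.length = n → τ.Sublist ω → CLE cs (π τ) (π ω)) ∧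
    (∀ w v : W, ∀ i : B, ℓ w = n → CLE cs v w → ℓ (w * σ i) < ℓ w → ℓ v < ℓ (v * σ i) →
      CLE cs v (w * σ i)) ∧
    (∀ w v : W, ∀ i : B, ℓ w = n → CLE cs v w → ℓ w < ℓ (w * σ i) → ℓ v < ℓ (v * σ i) →
      CLE cs (v * σ i) (w * σ i)) := by
  intro n
  induction n using Nat.strong_induction_on with
  | _ n IH =>
  have atom : ∀ w t : W, ∀ i : B, ℓ w = n → cs.IsReflection t → ℓ (w * t) < n →
      ℓ (w * σ i) < n → ℓ (w * t) < ℓ (w * t * σ i) → CLE cs (w * t) (w * σ i) := by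
    intro w t i hn ht hwt hws hup
    obtain ⟨σ₁, hσred, hσ⟩ := cs.exists_reduced_word' (w * σ i)
    have hσlen : σ₁.length = ℓ (w * σ i) := by
      rw [hσ]; exact hσred.symm
    have hπω : π (σ₁ ++ [i]) = w := by
      rw [cs.wordProd_append, cs.wordProd_singleton, ← hσ, cs.simple_mul_simple_cancel_right]
    have hlws : ℓ (w * σ i) + 1 = n := by
      have := len_succ_of_lt cs (i := i) (w := w) (by omega)
      omega
    have hωred : cs.IsReduced (σ₁ ++ [i]) := by
      rw [CoxeterSystem.IsReduced, hπω, List.length_append, List.length_singleton, hσlen]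
      omega
    have hinv : cs.IsRightInversion (π (σ₁ ++ [i])) t := ⟨ht, by rw [hπω]; omega⟩
    obtain ⟨j, hj, hjπ⟩ := exchange cs hωred hinv
    rw [hπω] at hjπ
    by_cases hjlast : j = σ₁.length
    · rw [hjlast, List.eraseIdx_append_of_length_le le_rfl, Nat.sub_self] at hjπ
      simp only [List.eraseIdx_cons_zero, List.append_nil] at hjπ
      rw [← hjπ, ← hσ]
      exact cle_refl cs _
    · have hjlt : j < σ₁.length := by
        rw [List.length_append, List.length_singleton] at hj
        omega
      rw [List.eraseIdx_append_of_lt_length hjlt, cs.wordProd_append,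
        cs.wordProd_singleton] at hjπ
      set y := π (σ₁.eraseIdx j) with hydef
      have hy : y = w * t * σ i := by
        rw [← hjπ, cs.simple_mul_simple_cancel_right]
      have h1 : CLE cs y (w * σ i) := by
        rw [hσ]
        exact (IH σ₁.length (by omega)).1 σ₁ (σ₁.eraseIdx j) hσred rfl
          (List.eraseIdx_sublist _ _)
      have h2 : CLE cs (w * t) y := by
        rw [hy]
        exact cle_step_up cs (cs.isReflection_simple i) hup
      exact cle_trans cs h2 h1
  refine ⟨?_, ?_, ?_⟩
  · -- F1 : subword implies chain
    intro ω τ hred hlen hsub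
    obtain ⟨τ', hτ'sub, hτ'red, hτ'π⟩ := exists_reduced_sublist cs τ.length τ le_rfl
    rw [← hτ'π]
    have hsub' : τ'.Sublist ω := hτ'sub.trans hsub
    rcases List.eq_nil_or_concat ω with rfl | ⟨ω₁, c, rfl⟩
    · rw [List.sublist_nil.mp hsub']
      exact cle_refl cs _
    · rw [List.concat_eq_append] at hred hlen hsub' ⊢
      have hm : ω₁.length + 1 = n := by
        rw [← hlen, List.length_append, List.length_singleton]
      have hω₁red : cs.IsReduced ω₁ := by
        have := hred.take ω₁.length
        rwa [List.take_left] at this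
      have hπω : π (ω₁ ++ [c]) = π ω₁ * σ c := by
        rw [cs.wordProd_append, cs.wordProd_singleton]
      have hl₁ : ℓ (π ω₁) = ω₁.length := hω₁red
      have hlw : ℓ (π ω₁ * σ c) = ω₁.length + 1 := by
        rw [← hπω]
        have := hred
        rwa [CoxeterSystem.IsReduced, List.length_append, List.length_singleton] at this
      rcases sublist_concat_cases hsub' with hcase | ⟨τ₁, rfl, hτ₁⟩
      · have h1 := (IH ω₁.length (by omega)).1 ω₁ τ' hω₁red rfl hcase
        refine cle_trans cs h1 ?_
        rw [hπω]
        exact cle_step_up cs (cs.isReflection_simple c) (by omega)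
      · have hτ₁red : cs.IsReduced τ₁ := by
          have := hτ'red.take τ₁.length
          rwa [List.take_left] at this
        have hπτ : π (τ₁ ++ [c]) = π τ₁ * σ c := by
          rw [cs.wordProd_append, cs.wordProd_singleton]
        have hlτ₁ : ℓ (π τ₁) = τ₁.length := hτ₁red
        have hlτ : ℓ (π τ₁ * σ c) = τ₁.length + 1 := by
          rw [← hπτ]
          have := hτ'red
          rwa [CoxeterSystem.IsReduced, List.length_append, List.length_singleton] at this
        have h1 := (IH ω₁.length (by omega)).1 ω₁ τ₁ hω₁red rfl hτ₁
        rw [hπω, hπτ]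
        exact (IH ω₁.length (by omega)).2.2 (π ω₁) (π τ₁) c (by omega) h1 (by omega)
          (by omega)
  · -- GD2 : down lifting
    intro w v i hn hvw hws hvs
    rcases hvw.cases_tail with rfl | ⟨z, hvz, t, ht, hz, hzw⟩
    · exact absurd hvs (by omega)
    subst hz
    by_cases hzs : ℓ (w * t * σ i) < ℓ (w * t)
    · have h1 := (IH (ℓ (w * t)) (by omega)).2.1 (w * t) v i rfl hvz hzs hvs
      refine cle_trans cs h1 ?_
      have hrefl := ht.conj (σ i)
      rw [cs.inv_simple] at hrefl
      have heq : (w * σ i) * (σ i * t * σ i) = w * t * σ i := by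
        rw [show σ i * t * σ i = (σ i)⁻¹ * t * σ i by rw [cs.inv_simple]]
        group
      have hlt : ℓ ((w * σ i) * (σ i * t * σ i)) < ℓ (w * σ i) := by
        rw [heq]
        have e1 := len_succ_of_lt cs hzs
        have e2 := len_succ_of_lt cs (w := w) (i := i) (by omega)
        omega
      have := cle_step_down cs hrefl hlt
      rwa [heq] at this
    · have hzs' := len_lt_of_not_gt cs hzs
      exact cle_trans cs hvz (atom w t i hn ht (by omega) (by omega) hzs')
  · -- GU : up lifting
    intro w v i hn hvw hws hvs
    rcases hvw.cases_tail with rfl | ⟨z, hvz, t, ht, hz, hzw⟩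
    · exact cle_refl cs _
    subst hz
    by_cases hzs : ℓ (w * t) < ℓ (w * t * σ i)
    · have h1 := (IH (ℓ (w * t)) (by omega)).2.2 (w * t) v i rfl hvz hzs hvs
      refine cle_trans cs h1 ?_
      have hrefl := ht.conj (σ i)
      rw [cs.inv_simple] at hrefl
      have heq : (w * σ i) * (σ i * t * σ i) = w * t * σ i := by
        rw [show σ i * t * σ i = (σ i)⁻¹ * t * σ i by rw [cs.inv_simple]]
        group
      have hlt : ℓ ((w * σ i) * (σ i * t * σ i)) < ℓ (w * σ i) := by
        rw [heq]
        have e1 := len_succ_of_gt cs hzs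
        have e2 := len_succ_of_gt cs (w := w) (i := i) (by omega)
        omega
      have := cle_step_down cs hrefl hlt
      rwa [heq] at this
    · have hzs' : ℓ (w * t * σ i) < ℓ (w * t) := by
        rcases cs.length_mul_simple (w * t) i with h' | h' <;> omega
      have h1 := (IH (ℓ (w * t)) (by omega)).2.1 (w * t) v i rfl hvz hzs' hvs
      have hcancel : (w * t * σ i) * σ i = w * t := cs.simple_mul_simple_cancel_right i
      have h2 := (IH (ℓ (w * t * σ i)) (by omega)).2.2 (w * t * σ i) v i rfl h1
        (by rw [hcancel]; omega) hvs
      rw [hcancel] at h2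
      have h3 : CLE cs (w * t) w := cle_step_down cs ht hzw
      have h4 : CLE cs w (w * σ i) := cle_step_up cs (cs.isReflection_simple i) hws
      exact cle_trans cs h2 (cle_trans cs h3 h4)

theorem cle_of_sublist {ω τ : List B} (hω : cs.IsReduced ω) (hτ : τ.Sublist ω) :
    CLE cs (π τ) (π ω) :=
  (master cs ω.length).1 ω τ hω rfl hτ

theorem cle_gd2 {w v : W} {i : B} (h : CLE cs v w) (hws : ℓ (w * σ i) < ℓ w)
    (hvs : ℓ v < ℓ (v * σ i)) : CLE cs v (w * σ i) :=
  (master cs (ℓ w)).2.1 w v i rfl h hws hvs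

theorem cle_gd1 {w v : W} {i : B} (h : CLE cs v w) (hws : ℓ (w * σ i) < ℓ w)
    (hvs : ℓ (v * σ i) < ℓ v) : CLE cs (v * σ i) (w * σ i) := by
  have h1 : CLE cs (v * σ i) w :=
    cle_trans cs (cle_step_down cs (cs.isReflection_simple i) hvs) h
  apply cle_gd2 cs h1 hws
  rw [cs.simple_mul_simple_cancel_right]
  omega

lemma cle_of_bruhatLE {v w : W} (h : cs.BruhatLE v w) : CLE cs v w := by
  obtain ⟨ω, hred, hπ, τ, hsub, hτ⟩ := h
  rw [← hπ, ← hτ]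
  exact cle_of_sublist cs hred hsub

lemma bruhatLT_mul_simple {x : W} {i : B} (h : ℓ x < ℓ (x * σ i)) :
    cs.BruhatLT x (x * σ i) := by
  obtain ⟨ρ, hρred, hρ⟩ := cs.exists_reduced_word' x
  have hρlen : ρ.length = ℓ x := by rw [hρ]; exact hρred.symm
  have hπρ : π (ρ ++ [i]) = x * σ i := by
    rw [cs.wordProd_append, cs.wordProd_singleton, ← hρ]
  constructor
  · refine ⟨ρ ++ [i], ?_, hπρ, ρ, List.sublist_append_left _ _, hρ.symm⟩
    rw [CoxeterSystem.IsReduced, hπρ, len_succ_of_gt cs h, List.length_append,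
      List.length_singleton, hρlen]
  · intro he
    rw [← he] at h
    omega

theorem main : ∀ ω : List B, cs.IsReduced ω → ∀ v : W, CLE cs v (π ω) →
    ∃ (k : ℕ) (j : Fin k → Fin ω.length), StrictMono j ∧
      cs.IsReduced (List.ofFn fun t => ω.get (j t)) ∧
      π (List.ofFn fun t => ω.get (j t)) = v ∧
      ∀ r : Fin ω.length,
        cs.BruhatLT
          (π ((List.ofFn fun t => ω.get (j t)).take
            ((Finset.univ.filter fun t => (j t : ℕ) < (r : ℕ)).card)))
          (π ((List.ofFn fun t => ω.get (j t)).take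
            ((Finset.univ.filter fun t => (j t : ℕ) < (r : ℕ)).card)) * σ (ω.get r)) := by
  intro ω
  induction ω using List.reverseRecOn with
  | nil =>
    intro _ v hv
    have hv1 : v = 1 := by
      have h2 := cle_length cs hv
      simp only [cs.wordProd_nil, cs.length_one, Nat.le_zero] at h2
      exact (cs.length_eq_zero_iff).mp h2
    subst hv1
    refine ⟨0, Fin.elim0, ?_, ?_, ?_, ?_⟩
    · intro a
      exact a.elim0
    · simp [CoxeterSystem.IsReduced]
    · simp
    · intro r
      exact r.elim0
  | append_singleton ω₁ c IH0 =>
    intro hred v hv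
    have hred₁ : cs.IsReduced ω₁ := by
      have := hred.take ω₁.length
      rwa [List.take_left] at this
    have hπ : π (ω₁ ++ [c]) = π ω₁ * σ c := by
      rw [cs.wordProd_append, cs.wordProd_singleton]
    have hl₁ : ℓ (π ω₁) = ω₁.length := hred₁
    have hlw : ℓ (π ω₁ * σ c) = ω₁.length + 1 := by
      rw [← hπ]
      have h3 := hred
      rwa [CoxeterSystem.IsReduced, List.length_append, List.length_singleton] at h3
    have hlenω : (ω₁ ++ [c]).length = ω₁.length + 1 := by
      rw [List.length_append, List.length_singleton]
    rw [hπ] at hv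
    by_cases hvs : ℓ (v * σ c) < ℓ v
    · -- the last position is chosen
      have h1 : CLE cs (v * σ c) (π ω₁) := by
        have h2 := cle_gd1 cs (i := c) hv
          (by rw [cs.simple_mul_simple_cancel_right]; omega) hvs
        rwa [cs.simple_mul_simple_cancel_right] at h2
      obtain ⟨k₁, j₁, hmono₁, hred', hprod', hcond'⟩ := IH0 hred₁ (v * σ c) h1
      set L₁ : List B := List.ofFn fun t => ω₁.get (j₁ t) with hL₁def
      have hlenL₁ : L₁.length = k₁ := by rw [hL₁def, List.length_ofFn]
      have hlvk : ℓ (v * σ c) = k₁ := by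
        have h4 : ℓ (π L₁) = L₁.length := hred'
        rw [← hprod', h4, hlenL₁]
      let j : Fin (k₁ + 1) → Fin ((ω₁ ++ [c]).length) := fun t =>
        if h : (t : ℕ) < k₁ then
          ⟨(j₁ ⟨t, h⟩ : ℕ), by rw [hlenω]; have := (j₁ ⟨(t : ℕ), h⟩).isLt; omega⟩
        else ⟨ω₁.length, by rw [hlenω]; omega⟩
      have hjval_lt : ∀ (t : Fin (k₁ + 1)) (h : (t : ℕ) < k₁),
          (j t : ℕ) = (j₁ ⟨(t : ℕ), h⟩ : ℕ) := by
        intro t h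
        simp only [j, dif_pos h]
      have hjval_last : ∀ (t : Fin (k₁ + 1)), ¬ (t : ℕ) < k₁ → (j t : ℕ) = ω₁.length := by
        intro t h
        simp only [j, dif_neg h]
      have hjcast : ∀ t : Fin k₁, (j t.castSucc : ℕ) = (j₁ t : ℕ) := by
        intro t
        have h : ((t.castSucc : Fin (k₁ + 1)) : ℕ) < k₁ := by simpa using t.isLt
        exact (hjval_lt t.castSucc h).trans
          (congrArg (fun x => ((j₁ x : Fin ω₁.length) : ℕ)) (Fin.ext (by simp)))
      have hget : ∀ (t : Fin (k₁ + 1)) (h : (t : ℕ) < k₁),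
          (ω₁ ++ [c]).get (j t) = ω₁.get (j₁ ⟨(t : ℕ), h⟩) := by
        intro t h
        have hval : (j t : ℕ) = (j₁ ⟨(t : ℕ), h⟩ : ℕ) := hjval_lt t h
        have hlt : (j t : ℕ) < ω₁.length := by rw [hval]; exact (j₁ _).isLt
        have hfin : (⟨(j t : ℕ), hlt⟩ : Fin ω₁.length) = j₁ ⟨(t : ℕ), h⟩ := Fin.ext hval
        calc (ω₁ ++ [c]).get (j t) = ω₁.get ⟨(j t : ℕ), hlt⟩ := by
              rw [List.get_eq_getElem, List.get_eq_getElem]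
              exact List.getElem_append_left hlt
          _ = ω₁.get (j₁ ⟨(t : ℕ), h⟩) := by rw [hfin]
      have hgetlast : ∀ (t : Fin (k₁ + 1)), ¬ (t : ℕ) < k₁ → (ω₁ ++ [c]).get (j t) = c := by
        intro t h
        rw [List.get_eq_getElem]
        exact List.getElem_concat_length (hjval_last t h) _
      have hL : (List.ofFn fun t => (ω₁ ++ [c]).get (j t)) = L₁ ++ [c] := by
        rw [List.ofFn_succ', List.concat_eq_append]
        congr 1
        · rw [hL₁def]
          congr 1
          funext t
          have h : ((t.castSucc : Fin (k₁ + 1)) : ℕ) < k₁ := by simpa using t.isLt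
          exact (hget t.castSucc h).trans
            (congrArg (fun x => ω₁.get (j₁ x)) (Fin.ext (by simp)))
        · rw [hgetlast (Fin.last k₁) (by simp)]
      have hπL : π (L₁ ++ [c]) = v := by
        rw [cs.wordProd_append, cs.wordProd_singleton, hprod',
          cs.simple_mul_simple_cancel_right]
      refine ⟨k₁ + 1, j, ?_, ?_, ?_, ?_⟩
      · intro a b hab
        have hab' : (a : ℕ) < (b : ℕ) := hab
        rw [Fin.lt_def]
        by_cases ha : (a : ℕ) < k₁
        · by_cases hb : (b : ℕ) < k₁
          · rw [hjval_lt a ha, hjval_lt b hb]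
            exact hmono₁ (show (⟨(a : ℕ), ha⟩ : Fin k₁) < ⟨(b : ℕ), hb⟩ from hab')
          · rw [hjval_lt a ha, hjval_last b hb]
            exact (j₁ _).isLt
        · exfalso
          have := b.isLt
          omega
      · rw [hL, CoxeterSystem.IsReduced, hπL, List.length_append, List.length_singleton,
          hlenL₁]
        have := len_succ_of_lt cs hvs
        omega
      · rw [hL, hπL]
      · intro r
        rw [hL]
        have hr : (r : ℕ) < ω₁.length + 1 := by
          have h5 := r.isLt
          omega
        have hcard : ∀ rn : ℕ,
            (Finset.univ.filter fun t : Fin (k₁ + 1) => ((j t : ℕ) < rn)).card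
              = (Finset.univ.filter fun t : Fin k₁ => ((j₁ t : ℕ) < rn)).card
                + (if ω₁.length < rn then 1 else 0) := by
          intro rn
          rw [Finset.card_filter, Finset.card_filter, Fin.sum_univ_castSucc]
          congr 1
          · apply Finset.sum_congr rfl
            intro t _
            rw [hjcast t]
          · rw [hjval_last _ (by simp)]
        by_cases hrm : (r : ℕ) < ω₁.length
        · have hre : (ω₁ ++ [c]).get r = ω₁.get ⟨(r : ℕ), hrm⟩ := by
            rw [List.get_eq_getElem, List.get_eq_getElem, List.getElem_append_left hrm]
          have hkle :
              (Finset.univ.filter fun t : Fin k₁ => ((j₁ t : ℕ) < (r : ℕ))).card ≤ k₁ := by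
            refine le_trans (Finset.card_filter_le _ _) ?_
            simp
          rw [hre, hcard (r : ℕ), if_neg (by omega), Nat.add_zero,
            List.take_append_of_le_length (by rw [hlenL₁]; exact hkle)]
          exact hcond' ⟨(r : ℕ), hrm⟩
        · have hrm' : (r : ℕ) = ω₁.length := by omega
          have hall :
              (Finset.univ.filter fun t : Fin k₁ => ((j₁ t : ℕ) < (r : ℕ))).card = k₁ := by
            rw [Finset.filter_true_of_mem, Finset.card_univ, Fintype.card_fin]
            intro t _
            rw [hrm']
            exact (j₁ t).isLt
          have htake : (L₁ ++ [c]).take k₁ = L₁ := by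
            rw [List.take_append_of_le_length (le_of_eq hlenL₁.symm), ← hlenL₁,
              List.take_length]
          have hgr : (ω₁ ++ [c]).get r = c := by
            rw [List.get_eq_getElem]
            exact List.getElem_concat_length hrm' _
          rw [hcard (r : ℕ), if_neg (by omega), Nat.add_zero, hall, htake, hprod', hgr]
          apply bruhatLT_mul_simple
          rw [cs.simple_mul_simple_cancel_right]
          exact hvs
    · -- the last position is not chosen
      have hvs' : ℓ v < ℓ (v * σ c) := len_lt_of_not_gt cs hvs
      have h1 : CLE cs v (π ω₁) := by
        have h2 := cle_gd2 cs (i := c) hv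
          (by rw [cs.simple_mul_simple_cancel_right]; omega) hvs'
        rwa [cs.simple_mul_simple_cancel_right] at h2
      obtain ⟨k₁, j₁, hmono₁, hred', hprod', hcond'⟩ := IH0 hred₁ v h1
      set L₁ : List B := List.ofFn fun t => ω₁.get (j₁ t) with hL₁def
      have hlenL₁ : L₁.length = k₁ := by rw [hL₁def, List.length_ofFn]
      let j : Fin k₁ → Fin ((ω₁ ++ [c]).length) := fun t =>
        ⟨(j₁ t : ℕ), by rw [hlenω]; have := (j₁ t).isLt; omega⟩
      have hjval : ∀ t : Fin k₁, (j t : ℕ) = (j₁ t : ℕ) := fun t => rfl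
      have hget : ∀ t : Fin k₁, (ω₁ ++ [c]).get (j t) = ω₁.get (j₁ t) := by
        intro t
        have hlt : (j t : ℕ) < ω₁.length := (j₁ t).isLt
        have hfin : (⟨(j t : ℕ), hlt⟩ : Fin ω₁.length) = j₁ t := Fin.ext rfl
        calc (ω₁ ++ [c]).get (j t) = ω₁.get ⟨(j t : ℕ), hlt⟩ := by
              rw [List.get_eq_getElem, List.get_eq_getElem]
              exact List.getElem_append_left hlt
          _ = ω₁.get (j₁ t) := by rw [hfin]
      have hL : (List.ofFn fun t => (ω₁ ++ [c]).get (j t)) = L₁ := by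
        rw [hL₁def]
        exact congrArg List.ofFn (funext hget)
      refine ⟨k₁, j, ?_, ?_, ?_, ?_⟩
      · intro a b hab
        rw [Fin.lt_def]
        exact hmono₁ hab
      · rw [hL]
        exact hred'
      · rw [hL]
        exact hprod'
      · intro r
        rw [hL]
        have hr : (r : ℕ) < ω₁.length + 1 := by
          have h5 := r.isLt
          omega
        have hfil :
            (Finset.univ.filter fun t : Fin k₁ => ((j t : ℕ) < (r : ℕ)))
              = (Finset.univ.filter fun t : Fin k₁ => ((j₁ t : ℕ) < (r : ℕ))) := rfl
        by_cases hrm : (r : ℕ) < ω₁.length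
        · have hre : (ω₁ ++ [c]).get r = ω₁.get ⟨(r : ℕ), hrm⟩ := by
            rw [List.get_eq_getElem, List.get_eq_getElem, List.getElem_append_left hrm]
          rw [hre, hfil]
          exact hcond' ⟨(r : ℕ), hrm⟩
        · have hrm' : (r : ℕ) = ω₁.length := by omega
          have hall :
              (Finset.univ.filter fun t : Fin k₁ => ((j₁ t : ℕ) < (r : ℕ))).card = k₁ := by
            rw [Finset.filter_true_of_mem, Finset.card_univ, Fintype.card_fin]
            intro t _
            rw [hrm']
            exact (j₁ t).isLt
          have htake : L₁.take k₁ = L₁ := by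
            rw [← hlenL₁, List.take_length]
          have hgr : (ω₁ ++ [c]).get r = c := by
            rw [List.get_eq_getElem]
            exact List.getElem_concat_length hrm' _
          rw [hfil, hall, htake, hprod', hgr]
          exact bruhatLT_mul_simple cs hvs'

end PosSub


/-- Existence of the positive (rightmost reduced) subexpression of Marsh–Rietsch:
given a reduced word `ω = (i₁, …, i_m)` for `w` and `v ≤ w` in Bruhat order, there is
a subexpression `s_{i_{j₁}} ⋯ s_{i_{j_k}}` (with `j₁ < ⋯ < j_k`) which is a reduced
word for `v` such that for each position `r` of `ω`, letting `l = #{t : j_t < r}`,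
we have `s_{i_{j₁}} ⋯ s_{i_{j_l}} · s_{i_r} > s_{i_{j₁}} ⋯ s_{i_{j_l}}` in Bruhat
order (this is exactly the condition for `j_l < r ≤ j_{l+1}`, `l = 0, …, k`, with the
conventions `j₀ = 0`, `j_{k+1} = m`). -/
theorem exists_positive_subexpression {B W : Type*} [Group W] [Finite W]
    {M : CoxeterMatrix B} (cs : CoxeterSystem M W)
    (ω : List B) (hred : cs.IsReduced ω) (w v : W) (hw : cs.wordProd ω = w)
    (hvw : cs.BruhatLE v w) :
    ∃ (k : ℕ) (j : Fin k → Fin ω.length), StrictMono j ∧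
      cs.IsReduced (List.ofFn fun t => ω.get (j t)) ∧
      cs.wordProd (List.ofFn fun t => ω.get (j t)) = v ∧
      ∀ r : Fin ω.length,
        cs.BruhatLT
          (cs.wordProd ((List.ofFn fun t => ω.get (j t)).take
            ((Finset.univ.filter fun t => (j t : ℕ) < (r : ℕ)).card)))
          (cs.wordProd ((List.ofFn fun t => ω.get (j t)).take
            ((Finset.univ.filter fun t => (j t : ℕ) < (r : ℕ)).card)) *
              cs.simple (ω.get r)) := by
  classical
  subst hw
  exact PosSub.main cs ω hred v (PosSub.cle_of_bruhatLE cs hvw)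
end

section
/- Let W be a finite Coxeter group and v < w in Bruhat order. Then the alternating sum Σ_{v ≤ z ≤ w} (-1)^{ℓ(z)} equals 0; equivalently, every interval [v, w] of length at least 1 in Bruhat order is Eulerian in the sense that it has equally many elements of odd and even length. -/
open List

namespace CoxeterSystem

variable {B : Type*} {W : Type*} [Group W] {M : CoxeterMatrix B} (cs : CoxeterSystem M W)

local prefix:100 "s" => cs.simple
local prefix:100 "π" => cs.wordProd
local prefix:100 "ℓ" => cs.length
local prefix:100 "ris" => cs.rightInvSeq
local prefix:100 "lis" => cs.leftInvSeq

open Classical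

/-- The generator permutations of the reflection representation used to prove
the strong exchange property. -/
noncomputable def bruhatPermAux (i : B) : W × ℤˣ → W × ℤˣ :=
  fun p => (s i * p.1 * s i, if p.1 = s i then -p.2 else p.2)

theorem bruhatPermAux_involutive (i : B) : Function.Involutive (cs.bruhatPermAux i) := by
  rintro ⟨t, ε⟩
  simp only [bruhatPermAux]
  have h1 : s i * (s i * t * s i) * s i = t := by
    simp [← mul_assoc, cs.simple_mul_simple_self]
  have h2 : (s i * t * s i = s i) ↔ (t = s i) := by
    constructor
    · intro h
      have := congrArg (fun x => s i * x * s i) h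
      simpa [← mul_assoc, cs.simple_mul_simple_self] using this
    · rintro rfl; simp [cs.simple_mul_simple_self]
  by_cases ht : t = s i
  · simp [ht, h2, h1, cs.simple_mul_simple_self]
  · simp [h1, h2, ht]

noncomputable def bruhatPerm (i : B) : Equiv.Perm (W × ℤˣ) :=
  (cs.bruhatPermAux_involutive i).toPerm

theorem bruhatPerm_apply (i : B) (t : W) (ε : ℤˣ) :
    cs.bruhatPerm i (t, ε) = (s i * t * s i, if t = s i then -ε else ε) := rfl


open Classical in
theorem test_count (t a : W) (l : List W) :
    List.count t (a :: l) = (if t = a then 1 else 0) + List.count t l := by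
  rw [List.count_cons]
  by_cases h : t = a <;> simp [h, Nat.add_comm, Ne.symm]

-- drop of alternating word
theorem drop_alternatingWord' (i j : B) (l N : ℕ) :
    (alternatingWord i j N).drop l = alternatingWord i j (N - l) := by
  induction l generalizing N with
  | zero => simp
  | succ l ih =>
    cases N with
    | zero => simp [alternatingWord]
    | succ N =>
      rw [alternatingWord_succ' i j N, List.drop_succ_cons, ih N]
      congr 1
      omega

theorem sj_pow_comm (i j : B) (a : ℕ) :
    s j * (s i * s j) ^ a = (s j * s i) ^ a * s j := by
  induction a with
  | zero => simp
  | succ a ih =>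
    rw [pow_succ, ← mul_assoc, ← mul_assoc, ih, pow_succ]
    group

theorem sj_conj_even (i j : B) (a : ℕ) :
    ((s i * s j) ^ a)⁻¹ * s j * ((s i * s j) ^ a) = (s j * s i) ^ (2 * a) * s j := by
  have hinv : ((s i * s j) ^ a)⁻¹ = (s j * s i) ^ a := by
    rw [← inv_pow, mul_inv_rev, cs.inv_simple, cs.inv_simple]
  rw [hinv, mul_assoc, sj_pow_comm, ← mul_assoc, ← pow_add, two_mul]

theorem sj_conj_odd (i j : B) (a : ℕ) :
    (s j * (s i * s j) ^ a)⁻¹ * s i * (s j * (s i * s j) ^ a) = (s j * s i) ^ (2 * a + 1) * s j := by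
  have hinv : ((s i * s j) ^ a)⁻¹ = (s j * s i) ^ a := by
    rw [← inv_pow, mul_inv_rev, cs.inv_simple, cs.inv_simple]
  rw [mul_inv_rev, hinv, cs.inv_simple]
  calc (s j * s i) ^ a * s j * s i * (s j * (s i * s j) ^ a)
      = (s j * s i) ^ a * (s j * s i) * (s j * (s i * s j) ^ a) := by group
    _ = (s j * s i) ^ a * (s j * s i) * ((s j * s i) ^ a * s j) := by rw [sj_pow_comm]
    _ = (s j * s i) ^ (a + 1 + a) * s j := by rw [← pow_succ, ← mul_assoc, ← pow_add]
    _ = (s j * s i) ^ (2 * a + 1) * s j := by rw [show a + 1 + a = 2 * a + 1 by omega]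

theorem getD_rightInvSeq_alternatingWord (i j : B) (N k : ℕ) (hk : k < N) :
    (ris (alternatingWord i j N)).getD k 1 = (s j * s i) ^ (N - 1 - k) * s j := by
  rw [cs.getD_rightInvSeq]
  have hdrop : (alternatingWord i j N).drop (k + 1) = alternatingWord i j (N - 1 - k) := by
    rw [drop_alternatingWord']
    congr 1
    omega
  have h3 : N - k = N - 1 - k + 1 := by omega
  have h4 : (alternatingWord i j N).drop k
      = (if Even (N - 1 - k) then j else i) :: alternatingWord i j (N - 1 - k) := by
    rw [drop_alternatingWord', h3, alternatingWord_succ']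
  have hget : (alternatingWord i j N)[k]? = some (if Even (N - 1 - k) then j else i) := by
    have h5 : ((alternatingWord i j N).drop k)[0]? = (alternatingWord i j N)[k + 0]? :=
      List.getElem?_drop
    rw [h4] at h5
    simpa using h5.symm
  rw [hdrop, hget]
  rcases Nat.even_or_odd (N - 1 - k) with hre | hro
  · obtain ⟨a, ha⟩ := hre
    have ha' : N - 1 - k = 2 * a := by omega
    rw [ha', cs.prod_alternatingWord_eq_mul_pow]
    have h2 : 2 * a / 2 = a := by omega
    rw [if_pos (by exact ⟨a, by omega⟩), h2]
    simpa [one_mul] using cs.sj_conj_even i j a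
  · obtain ⟨a, ha⟩ := hro
    rw [ha, cs.prod_alternatingWord_eq_mul_pow]
    have h2 : (2 * a + 1) / 2 = a := by omega
    have hne : ¬ Even (2 * a + 1) := by simp [Nat.even_iff]
    rw [if_neg hne, h2]
    simpa using cs.sj_conj_odd i j a

open Classical in
theorem count_ris_alternatingWord_even (i j : B) (t : W) :
    Even ((ris (alternatingWord i j (2 * M i j))).count t) := by
  set m := M i j with hm
  have hrel : (s j * s i) ^ m = 1 := cs.simple_mul_simple_pow' i j
  set σ := alternatingWord i j (2 * m) with hσ
  have hlen : (ris σ).length = 2 * m := by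
    rw [cs.length_rightInvSeq, hσ, length_alternatingWord]
  have htd : (ris σ).take m = (ris σ).drop m := by
    apply List.ext_getElem
    · simp [hlen]; omega
    · intro k hk1 hk2
      have hk : k < m := by simp [hlen] at hk1; omega
      rw [List.getElem_take, List.getElem_drop]
      have e1 : (ris σ)[k] = (ris σ).getD k 1 := by
        rw [List.getD_eq_getElem _ _ (by omega : k < (ris σ).length)]
      have e2 : (ris σ)[m + k] = (ris σ).getD (m + k) 1 := by
        rw [List.getD_eq_getElem _ _ (by omega : m + k < (ris σ).length)]
      rw [e1, e2, cs.getD_rightInvSeq_alternatingWord i j _ _ (by omega),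
        cs.getD_rightInvSeq_alternatingWord i j _ _ (by omega)]
      have h1 : 2 * m - 1 - k = (2 * m - 1 - (m + k)) + m := by omega
      rw [h1, pow_add, hrel, mul_one]
  have : ris σ = (ris σ).take m ++ (ris σ).drop m := (List.take_append_drop m _).symm
  rw [this, List.count_append, ← htd]
  exact ⟨_, rfl⟩

theorem alternatingWord_two_mul_succ (i j : B) (m : ℕ) :
    alternatingWord i j (2 * (m + 1)) = i :: j :: alternatingWord i j (2 * m) := by
  have h1 : 2 * (m + 1) = (2 * m + 1) + 1 := by omega
  rw [h1, alternatingWord_succ', if_neg (by simp [Nat.even_iff]), alternatingWord_succ',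
    if_pos (by simp [Nat.even_iff])]

theorem prod_map_bruhatPerm_alternatingWord (i j : B) (m : ℕ) :
    ((alternatingWord i j (2 * m)).map cs.bruhatPerm).prod
      = (cs.bruhatPerm i * cs.bruhatPerm j) ^ m := by
  induction m with
  | zero => simp [alternatingWord]
  | succ m ih =>
    rw [alternatingWord_two_mul_succ, List.map_cons, List.map_cons, List.prod_cons,
      List.prod_cons, ih, pow_succ']
    rw [mul_assoc]

open Classical in
theorem prod_map_bruhatPerm_apply (ω : List B) (t : W) (ε : ℤˣ) :
    ((ω.map cs.bruhatPerm).prod) (t, ε)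
      = (π ω * t * (π ω)⁻¹, (-1 : ℤˣ) ^ ((ris ω).count t) * ε) := by
  induction ω generalizing t ε with
  | nil => simp
  | cons i ω ih =>
    rw [List.map_cons, List.prod_cons, Equiv.Perm.mul_apply, ih]
    have hris : ris (i :: ω) = ((π ω)⁻¹ * (s i) * (π ω)) :: ris ω := rfl
    rw [cs.bruhatPerm_apply, hris, test_count]
    have hiff : (π ω * t * (π ω)⁻¹ = s i) ↔ (t = (π ω)⁻¹ * (s i) * (π ω)) := by
      constructor
      · intro h; rw [← h]; group
      · intro h; rw [h]; group
    have hw : π (i :: ω) = s i * π ω := cs.wordProd_cons i ω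
    by_cases h : t = (π ω)⁻¹ * (s i) * (π ω)
    · rw [if_pos (hiff.mpr h), if_pos h, hw]
      refine Prod.ext ?_ ?_
      · simp only [mul_inv_rev, cs.inv_simple]
        group
      · simp only []
        rw [pow_add, pow_one, neg_one_mul, neg_mul]
    · rw [if_neg (fun hh => h (hiff.mp hh)), if_neg h, hw]
      refine Prod.ext ?_ ?_
      · simp only [mul_inv_rev, cs.inv_simple]
        group
      · simp

open Classical in
theorem bruhatPerm_liftable : M.IsLiftable (fun i => cs.bruhatPerm i) := by
  intro i j
  rw [← cs.prod_map_bruhatPerm_alternatingWord i j (M i j)]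
  apply Equiv.ext
  rintro ⟨t, ε⟩
  rw [cs.prod_map_bruhatPerm_apply]
  have h1 : π (alternatingWord i j (2 * M i j)) = 1 := by
    rw [cs.prod_alternatingWord_eq_mul_pow, if_pos (by exact ⟨M i j, by omega⟩)]
    rw [show 2 * M i j / 2 = M i j by omega, cs.simple_mul_simple_pow i j, one_mul]
  have h2 : ((-1 : ℤˣ) ^ ((ris (alternatingWord i j (2 * M i j))).count t)) = 1 :=
    (cs.count_ris_alternatingWord_even i j t).neg_one_pow
  rw [h1, h2, one_mul]
  simp

/-- The reflection representation homomorphism used for strong exchange. -/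
noncomputable def bruhatRep : W →* Equiv.Perm (W × ℤˣ) :=
  CoxeterSystem.lift cs ⟨fun i => cs.bruhatPerm i, cs.bruhatPerm_liftable⟩

theorem bruhatRep_simple (i : B) : cs.bruhatRep (s i) = cs.bruhatPerm i :=
  cs.lift_apply_simple cs.bruhatPerm_liftable i

theorem bruhatRep_wordProd (ω : List B) :
    cs.bruhatRep (π ω) = (ω.map cs.bruhatPerm).prod := by
  induction ω with
  | nil => simp
  | cons i ω ih =>
    rw [cs.wordProd_cons, map_mul, cs.bruhatRep_simple, List.map_cons, List.prod_cons, ih]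

/-- The sign of `t` in `w`: `-1` iff `t` is a right inversion of `w`. -/
noncomputable def eta (w t : W) : ℤˣ := (cs.bruhatRep w (t, 1)).2

open Classical in
theorem eta_eq_count {w : W} {ω : List B} (hω : π ω = w) (t : W) :
    cs.eta w t = (-1 : ℤˣ) ^ ((ris ω).count t) := by
  subst hω
  rw [eta, cs.bruhatRep_wordProd, cs.prod_map_bruhatPerm_apply, mul_one]

theorem bruhatRep_apply (w t : W) (ε : ℤˣ) :
    cs.bruhatRep w (t, ε) = (w * t * w⁻¹, cs.eta w t * ε) := by
  obtain ⟨ω, rfl⟩ := cs.wordProd_surjective w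
  classical
  rw [cs.bruhatRep_wordProd, cs.prod_map_bruhatPerm_apply, cs.eta_eq_count rfl]

theorem eta_mul (x y t : W) : cs.eta (x * y) t = cs.eta x (y * t * y⁻¹) * cs.eta y t := by
  have := congrArg Prod.snd (by
    rw [map_mul, Equiv.Perm.mul_apply, cs.bruhatRep_apply y t 1, cs.bruhatRep_apply] :
    cs.bruhatRep (x * y) (t, 1) = _)
  simpa [eta] using this

theorem eta_inv (u t : W) : cs.eta u⁻¹ t = cs.eta u (u⁻¹ * t * u) := by
  have h := cs.eta_mul u u⁻¹ t
  rw [mul_inv_cancel] at h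
  have h1 : cs.eta 1 t = 1 := by simp [eta]
  rw [h1, inv_inv] at h
  have := congrArg (fun z => cs.eta u (u⁻¹ * t * u) * z) h.symm
  simpa [← mul_assoc] using this

theorem eta_simple_self (i : B) : cs.eta (s i) (s i) = -1 := by
  rw [eta, cs.bruhatRep_simple, cs.bruhatPerm_apply, if_pos rfl]

theorem eta_reflection_self {t : W} (ht : cs.IsReflection t) : cs.eta t t = -1 := by
  obtain ⟨u, k, rfl⟩ := ht
  set t := u * s k * u⁻¹ with hts
  have h1 : t = u * (s k * u⁻¹) := by rw [hts]; group
  rw [h1, cs.eta_mul]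
  have h2 : s k * u⁻¹ * (u * (s k * u⁻¹)) * (s k * u⁻¹)⁻¹ = s k := by
    rw [mul_inv_rev, cs.inv_simple]; group
    rw [cs.simple_mul_simple_self, one_mul]
  rw [h2, cs.eta_mul]
  have h3 : u⁻¹ * (u * (s k * u⁻¹)) * u⁻¹⁻¹ = s k := by group
  rw [h3, cs.eta_simple_self, cs.eta_inv]
  have h4 : u⁻¹ * (u * (s k * u⁻¹)) * u = s k := by group
  rw [h4]
  rw [show (-1 : ℤˣ) * (cs.eta u (s k)) = (cs.eta u (s k)) * -1 from mul_comm _ _,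
    ← mul_assoc, Int.units_mul_self, one_mul]

open Classical in
theorem eta_eq_neg_one_iff_mem {ω : List B} (hω : cs.IsReduced ω) (t : W) :
    t ∈ ris ω ↔ cs.eta (π ω) t = -1 := by
  rw [cs.eta_eq_count rfl]
  constructor
  · intro h
    rw [List.count_eq_one_of_mem hω.nodup_rightInvSeq h, pow_one]
  · intro h
    by_contra hmem
    rw [List.count_eq_zero_of_not_mem hmem, pow_zero] at h
    exact absurd h (by decide)

/-- The strong exchange property, right-handed version. -/
theorem strongExchange_right {ω : List B} (hω : cs.IsReduced ω) {t : W}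
    (ht : cs.IsReflection t) (hl : ℓ (π ω * t) < ℓ (π ω)) : t ∈ ris ω := by
  rw [cs.eta_eq_neg_one_iff_mem hω]
  by_contra hne
  obtain ⟨τ, hτ, hπτ⟩ := cs.exists_reduced_word' (π ω * t)
  have h1 : cs.eta (π ω * t) t = cs.eta (π ω) t * cs.eta t t := by
    rw [cs.eta_mul]
    congr 2
    have := ht.mul_self
    calc t * t * t⁻¹ = t⁻¹ := by rw [this, one_mul]
    _ = t := ht.inv
  have h2 : cs.eta (π ω) t = 1 := by
    rcases Int.units_eq_one_or (cs.eta (π ω) t) with h | h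
    · exact h
    · exact absurd h hne
  rw [h2, cs.eta_reflection_self ht, one_mul] at h1
  have h3 : t ∈ ris τ := by
    rw [cs.eta_eq_neg_one_iff_mem hτ, ← hπτ]
    exact h1
  have h4 := (cs.isRightInversion_of_mem_rightInvSeq hτ h3).2
  rw [← hπτ, mul_assoc, ht.mul_self, mul_one] at h4
  omega

theorem strongExchange_left {ω : List B} (hω : cs.IsReduced ω) {t : W}
    (ht : cs.IsReflection t) (hl : ℓ (t * π ω) < ℓ (π ω)) : t ∈ lis ω := by
  have h1 : t ∈ ris (ω.reverse) := by
    apply cs.strongExchange_right ((cs.isReduced_reverse_iff ω).mpr hω) ht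
    rw [cs.wordProd_reverse]
    have e1 : ℓ ((π ω)⁻¹ * t) = ℓ (t * π ω) := by
      rw [← cs.length_inv, mul_inv_rev, inv_inv, ht.inv]
    rw [e1, cs.length_inv]
    exact hl
  rw [cs.rightInvSeq_reverse, List.mem_reverse] at h1
  exact h1

theorem exists_eraseIdx_of_descent_left {ω : List B} (hω : cs.IsReduced ω) {t : W}
    (ht : cs.IsReflection t) (hl : ℓ (t * π ω) < ℓ (π ω)) :
    ∃ j, j < ω.length ∧ π (ω.eraseIdx j) = t * π ω := by
  have h1 := cs.strongExchange_left hω ht hl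
  obtain ⟨j, hj, hget⟩ := List.mem_iff_getElem.mp h1
  have hj' : j < ω.length := by
    rw [cs.length_leftInvSeq] at hj
    exact hj
  refine ⟨j, hj', ?_⟩
  have := cs.getD_leftInvSeq_mul_wordProd ω j
  rw [List.getD_eq_getElem _ _ hj, hget] at this
  exact this.symm

theorem exists_eraseIdx_of_descent_right {ω : List B} (hω : cs.IsReduced ω) {t : W}
    (ht : cs.IsReflection t) (hl : ℓ (π ω * t) < ℓ (π ω)) :
    ∃ j, j < ω.length ∧ π (ω.eraseIdx j) = π ω * t := by
  have h1 := cs.strongExchange_right hω ht hl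
  obtain ⟨j, hj, hget⟩ := List.mem_iff_getElem.mp h1
  have hj' : j < ω.length := by
    rw [cs.length_rightInvSeq] at hj
    exact hj
  refine ⟨j, hj', ?_⟩
  have := cs.wordProd_mul_getD_rightInvSeq ω j
  rw [List.getD_eq_getElem _ _ hj, hget] at this
  exact this.symm

/-- The deletion property: every word contains a reduced sublist with the same product. -/
theorem exists_reduced_sublist (ω : List B) :
    ∃ σ, σ.Sublist ω ∧ cs.IsReduced σ ∧ π σ = π ω := by
  induction ω using List.reverseRecOn with
  | nil => exact ⟨[], List.Sublist.refl _, by simp [IsReduced], rfl⟩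
  | append_singleton ω₀ k ih =>
    obtain ⟨σ, hsub, hred, hprod⟩ := ih
    have hπ : π (ω₀ ++ [k]) = π σ * s k := by
      rw [cs.wordProd_append, cs.wordProd_singleton, hprod]
    rcases cs.length_mul_simple (π σ) k with hup | hdown
    · refine ⟨σ ++ [k], hsub.append (List.Sublist.refl [k]), ?_, ?_⟩
      · show ℓ (π (σ ++ [k])) = (σ ++ [k]).length
        have hr : ℓ (π σ) = σ.length := hred
        rw [cs.wordProd_append, cs.wordProd_singleton, hup, hr]
        simp
      · rw [cs.wordProd_append, cs.wordProd_singleton, hπ]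
    · have hlt : ℓ (π σ * s k) < ℓ (π σ) := by omega
      obtain ⟨j, hj, hjp⟩ := cs.exists_eraseIdx_of_descent_right hred
        (cs.isReflection_simple k) hlt
      refine ⟨σ.eraseIdx j, ?_, ?_, ?_⟩
      · exact ((σ.eraseIdx_sublist j).trans hsub).trans (List.sublist_append_left ω₀ [k])
      · show ℓ (π (σ.eraseIdx j)) = (σ.eraseIdx j).length
        have hr : ℓ (π σ) = σ.length := hred
        have hlen := List.length_eraseIdx_add_one hj
        rw [hjp]
        omega
      · rw [hjp, hπ]

/-- One step of the Bruhat chain order: multiply by a reflection on the right,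
increasing length. -/
def chainStep (x y : W) : Prop :=
  ∃ t, cs.IsReflection t ∧ y = x * t ∧ cs.length x < cs.length y

/-- The Bruhat order, defined via chains of reflections. -/
def ChainLE (v w : W) : Prop := Relation.ReflTransGen cs.chainStep v w

theorem ChainLE.refl (v : W) : cs.ChainLE v v := Relation.ReflTransGen.refl

theorem ChainLE.trans {u v w : W} (h1 : cs.ChainLE u v) (h2 : cs.ChainLE v w) :
    cs.ChainLE u w := Relation.ReflTransGen.trans h1 h2

theorem chainLE_length_le {v w : W} (h : cs.ChainLE v w) : ℓ v ≤ ℓ w := by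
  induction h with
  | refl => exact le_refl _
  | tail _ hstep ih =>
    obtain ⟨t, _, rfl, hlen⟩ := hstep
    omega

theorem chainLE_of_step {x y : W} (h : cs.chainStep x y) : cs.ChainLE x y :=
  Relation.ReflTransGen.single h

/-- Left multiplication by a simple reflection that increases length goes up in chain order. -/
theorem chainLE_simple_mul_of_ascent {x : W} {i : B} (h : ℓ x < ℓ (s i * x)) :
    cs.ChainLE x (s i * x) := by
  apply cs.chainLE_of_step
  refine ⟨x⁻¹ * s i * x, ?_, by group, h⟩
  have := (cs.isReflection_simple i).conj x⁻¹
  simpa using this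

theorem chainLE_simple_mul_of_descent {x : W} {i : B} (h : ℓ (s i * x) < ℓ x) :
    cs.ChainLE (s i * x) x := by
  have h2 : ℓ (s i * x) < ℓ (s i * (s i * x)) := by
    rw [cs.simple_mul_simple_cancel_left]
    exact h
  have := cs.chainLE_simple_mul_of_ascent h2
  rwa [cs.simple_mul_simple_cancel_left] at this

/-- From a left descent, a reduced word starting with that simple generator. -/
theorem exists_reduced_word_cons {w : W} {i : B} (h : ℓ (s i * w) < ℓ w) :
    ∃ τ, cs.IsReduced (i :: τ) ∧ π (i :: τ) = w := by
  obtain ⟨ω, hω, hπ⟩ := cs.exists_reduced_word' w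
  obtain ⟨j, hj, hjp⟩ := cs.exists_eraseIdx_of_descent_left hω (cs.isReflection_simple i)
    (by rw [← hπ]; exact h)
  have hprod : π (i :: ω.eraseIdx j) = w := by
    rw [cs.wordProd_cons, hjp, cs.simple_mul_simple_cancel_left, hπ]
  refine ⟨ω.eraseIdx j, ?_, hprod⟩
  show ℓ (π (i :: ω.eraseIdx j)) = (i :: ω.eraseIdx j).length
  have hlen : ℓ (s i * w) + 1 = ℓ w := by
    rcases cs.length_simple_mul w i with h1 | h1
    · omega
    · exact h1
  have hr : ℓ (π ω) = ω.length := hω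
  have hlen2 := List.length_eraseIdx_add_one hj
  rw [hprod, List.length_cons, ← hπ] at *
  omega

private theorem chainLE_iii_aux : ∀ n : ℕ, ∀ w v : W, ∀ i : B, ℓ w = n →
    ℓ (s i * w) < ℓ w → cs.ChainLE v w → ℓ v < ℓ (s i * v) → cs.ChainLE v (s i * w) := by
  intro n
  induction n using Nat.strong_induction_on with
  | _ n IH =>
    intro w v i hn hd hc ha
    rcases Relation.ReflTransGen.cases_tail hc with heq | ⟨y, hvy, hstep⟩
    · rw [heq] at hd
      omega
    · obtain ⟨t, ht, hw, hlen⟩ := hstep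
      have hsw : ℓ (s i * w) + 1 = ℓ w := by
        rcases cs.length_simple_mul w i with h1 | h1 <;> omega
      have htodd : ℓ t % 2 = 1 := Nat.odd_iff.mp ht.odd_length
      have hpar : ℓ y % 2 ≠ ℓ w % 2 := by
        have := cs.length_mul_mod_two y t
        rw [← hw] at this
        omega
      rcases cs.length_simple_mul y i with hup | hdown
      · -- ascent at y
        rcases (by omega : ℓ y + 1 = ℓ w ∨ ℓ y + 1 < ℓ w - 1) with hcover | hy3
        · -- cover case : prove y = s i * w
          obtain ⟨τ, hτred, hτprod⟩ := cs.exists_reduced_word_cons hd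
          have hwt : w * t = y := by
            rw [hw, mul_assoc, ht.mul_self, mul_one]
          have hlt : ℓ (π (i :: τ) * t) < ℓ (π (i :: τ)) := by
            rw [hτprod, hwt]
            exact hlen
          obtain ⟨j, hj, hjp⟩ := cs.exists_eraseIdx_of_descent_right hτred ht hlt
          rw [hτprod, hwt] at hjp
          cases j with
          | zero =>
            have h0 : (i :: τ).eraseIdx 0 = τ := rfl
            rw [h0] at hjp
            have hy : y = s i * w := by
              rw [← hjp, ← hτprod, cs.wordProd_cons, cs.simple_mul_simple_cancel_left]
            rw [← hy]
            exact hvy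
          | succ j' =>
            exfalso
            have h0 : (i :: τ).eraseIdx (j' + 1) = i :: τ.eraseIdx j' := rfl
            rw [h0, cs.wordProd_cons] at hjp
            have h1 : π (τ.eraseIdx j') = s i * y := by
              rw [← hjp, cs.simple_mul_simple_cancel_left]
            have h2 : ℓ (π (τ.eraseIdx j')) ≤ τ.length - 1 := by
              calc ℓ (π (τ.eraseIdx j')) ≤ (τ.eraseIdx j').length := cs.length_wordProd_le _
                _ ≤ τ.length - 1 := by
                    have := List.length_eraseIdx_add_one (show j' < τ.length by
                      simpa using hj)
                    omega
            have hτlen : τ.length + 1 = n := by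
              have := hτred
              unfold IsReduced at this
              rw [hτprod] at this
              simp at this
              omega
            rw [h1] at h2
            omega
        · -- low case: v ≤ y ≤ s i y ≤ s i w
          have h1 : cs.ChainLE y (s i * y) := cs.chainLE_simple_mul_of_ascent (by omega)
          refine ((hvy.trans h1).tail ?_)
          exact ⟨t, ht, by rw [hw, mul_assoc], by omega⟩
      · -- descent at y
        have h1 : cs.ChainLE v (s i * y) :=
          IH (ℓ y) (by omega) y v i rfl (by omega) hvy ha
        refine h1.tail ⟨t, ht, by rw [hw, mul_assoc], by omega⟩

/-- Lifting property, part: `v ≤ w`, `sw < w`, `sv > v` imply `v ≤ sw`. -/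
theorem chainLE_of_descent_of_ascent {w v : W} {i : B} (hd : ℓ (s i * w) < ℓ w)
    (hc : cs.ChainLE v w) (ha : ℓ v < ℓ (s i * v)) : cs.ChainLE v (s i * w) :=
  cs.chainLE_iii_aux (ℓ w) w v i rfl hd hc ha

private theorem chainLE_mono_aux : ∀ n : ℕ, ∀ q v : W, ∀ i : B, ℓ q = n →
    ℓ q < ℓ (s i * q) → cs.ChainLE v q → ℓ v < ℓ (s i * v) →
    cs.ChainLE (s i * v) (s i * q) := by
  intro n
  induction n using Nat.strong_induction_on with
  | _ n IH =>
    intro q v i hn hqa hc hva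
    rcases Relation.ReflTransGen.cases_tail hc with heq | ⟨y, hvy, hstep⟩
    · rw [heq]
      exact Relation.ReflTransGen.refl
    · obtain ⟨t, ht, hq, hlen⟩ := hstep
      have hsq : ℓ (s i * q) = ℓ q + 1 := by
        rcases cs.length_simple_mul q i with h1 | h1 <;> omega
      rcases cs.length_simple_mul y i with hup | hdown
      · -- ascent at y
        have h1 : cs.ChainLE (s i * v) (s i * y) :=
          IH (ℓ y) (by omega) y v i rfl (by omega) hvy hva
        refine h1.tail ⟨t, ht, by rw [hq, mul_assoc], by omega⟩
      · -- descent at y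
        have h1 : cs.ChainLE v (s i * y) :=
          cs.chainLE_of_descent_of_ascent (by omega) hvy hva
        have hasc : ℓ (s i * y) < ℓ (s i * (s i * y)) := by
          rw [cs.simple_mul_simple_cancel_left]
          omega
        have h2 : cs.ChainLE (s i * v) (s i * (s i * y)) :=
          IH (ℓ (s i * y)) (by omega) (s i * y) v i rfl hasc h1 hva
        rw [cs.simple_mul_simple_cancel_left] at h2
        have h3 : cs.ChainLE y q := cs.chainLE_of_step ⟨t, ht, hq, hlen⟩
        have h4 : cs.ChainLE q (s i * q) := cs.chainLE_simple_mul_of_ascent (by omega)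
        exact ChainLE.trans cs (ChainLE.trans cs h2 h3) h4

/-- Monotonicity of chain order under left multiplication by an ascending simple reflection. -/
theorem chainLE_mono {q v : W} {i : B} (hqa : ℓ q < ℓ (s i * q)) (hc : cs.ChainLE v q)
    (hva : ℓ v < ℓ (s i * v)) : cs.ChainLE (s i * v) (s i * q) :=
  cs.chainLE_mono_aux (ℓ q) q v i rfl hqa hc hva

/-- Lifting: `v ≤ w`, `sw < w`, `sv < v` imply `sv ≤ sw`. -/
theorem chainLE_of_descent_of_descent {w v : W} {i : B} (hd : ℓ (s i * w) < ℓ w)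
    (hc : cs.ChainLE v w) (hva : ℓ (s i * v) < ℓ v) :
    cs.ChainLE (s i * v) (s i * w) := by
  have h1 : cs.ChainLE (s i * v) w := ChainLE.trans cs (cs.chainLE_simple_mul_of_descent hva) hc
  apply cs.chainLE_of_descent_of_ascent hd h1
  rw [cs.simple_mul_simple_cancel_left]
  omega

/-- Lifting: `v ≤ w`, `sw < w` imply `sv ≤ w`. -/
theorem chainLE_simple_mul_left {w v : W} {i : B} (hd : ℓ (s i * w) < ℓ w)
    (hc : cs.ChainLE v w) : cs.ChainLE (s i * v) w := by
  rcases cs.length_simple_mul v i with hup | hdown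
  · have h1 : cs.ChainLE v (s i * w) := cs.chainLE_of_descent_of_ascent hd hc (by omega)
    have hasc : ℓ (s i * w) < ℓ (s i * (s i * w)) := by
      rw [cs.simple_mul_simple_cancel_left]
      omega
    have h2 : cs.ChainLE (s i * v) (s i * (s i * w)) := cs.chainLE_mono hasc h1 (by omega)
    rwa [cs.simple_mul_simple_cancel_left] at h2
  · exact ChainLE.trans cs (cs.chainLE_simple_mul_of_descent (by omega)) hc

/-- Lifting: `v ≤ sw`, `sw < w` imply `sv ≤ w`. -/
theorem chainLE_of_le_sub {w v : W} {i : B} (hd : ℓ (s i * w) < ℓ w)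
    (hc : cs.ChainLE v (s i * w)) : cs.ChainLE v w ∧ cs.ChainLE (s i * v) w := by
  have hsw : cs.ChainLE (s i * w) w := cs.chainLE_simple_mul_of_descent hd
  constructor
  · exact ChainLE.trans cs hc hsw
  · rcases cs.length_simple_mul v i with hup | hdown
    · have hasc : ℓ (s i * w) < ℓ (s i * (s i * w)) := by
        rw [cs.simple_mul_simple_cancel_left]
        omega
      have h2 : cs.ChainLE (s i * v) (s i * (s i * w)) := cs.chainLE_mono hasc hc (by omega)
      rwa [cs.simple_mul_simple_cancel_left] at h2
    · exact ChainLE.trans cs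
        (ChainLE.trans cs (cs.chainLE_simple_mul_of_descent (by omega)) hc) hsw

/-- The subword property: if `v ≤ w` in chain order, then every reduced word for `w`
has a reduced sublist whose product is `v`. -/
theorem exists_sublist_of_chainLE {v w : W} (h : cs.ChainLE v w) :
    ∀ τ : List B, cs.IsReduced τ → π τ = w →
      ∃ τ', τ'.Sublist τ ∧ cs.IsReduced τ' ∧ π τ' = v := by
  induction h with
  | refl =>
    intro τ hτ hπ
    exact ⟨τ, List.Sublist.refl τ, hτ, hπ⟩
  | tail hvb hbc ih =>
    intro τ hτ hπ
    obtain ⟨t, ht, rfl, hlen⟩ := hbc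
    rename_i b
    have hlt : ℓ (π τ * t) < ℓ (π τ) := by
      rw [hπ, mul_assoc, ht.mul_self, mul_one]
      exact hlen
    obtain ⟨j, hj, hjp⟩ := cs.exists_eraseIdx_of_descent_right hτ ht hlt
    rw [hπ, mul_assoc, ht.mul_self, mul_one] at hjp
    obtain ⟨σ, hσsub, hσred, hσπ⟩ := cs.exists_reduced_sublist (τ.eraseIdx j)
    rw [hjp] at hσπ
    obtain ⟨τ', hsub', hred', hπ'⟩ := ih σ hσred hσπ
    exact ⟨τ', (hsub'.trans hσsub).trans (τ.eraseIdx_sublist j), hred', hπ'⟩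

theorem chainLE_of_sublist : ∀ ω : List B, cs.IsReduced ω →
    ∀ ω' : List B, ω'.Sublist ω → cs.ChainLE (π ω') (π ω) := by
  intro ω
  induction ω with
  | nil =>
    intro _ ω' hsub
    rw [List.sublist_nil.mp hsub]
    exact Relation.ReflTransGen.refl
  | cons i ω₀ ih =>
    intro hred ω' hsub
    have hred₀ : cs.IsReduced ω₀ := by
      have := hred.drop 1
      simpa using this
    have hr1 : ℓ (π (i :: ω₀)) = ω₀.length + 1 := by
      have : ℓ (π (i :: ω₀)) = (i :: ω₀).length := hred
      simpa using this
    have hr0 : ℓ (π ω₀) = ω₀.length := hred₀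
    have hasc : ℓ (π ω₀) < ℓ (s i * π ω₀) := by
      rw [← cs.wordProd_cons]
      omega
    have hstep : cs.ChainLE (π ω₀) (π (i :: ω₀)) := by
      rw [cs.wordProd_cons]
      exact cs.chainLE_simple_mul_of_ascent hasc
    cases hsub with
    | cons _ h =>
      exact ChainLE.trans cs (ih hred₀ ω' h) hstep
    | cons_cons _ h =>
      rename_i ρ
      have hIH : cs.ChainLE (π ρ) (π ω₀) := ih hred₀ ρ h
      rcases cs.length_simple_mul (π ρ) i with hup | hdown
      · rw [cs.wordProd_cons, cs.wordProd_cons]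
        exact cs.chainLE_mono hasc hIH (by omega)
      · rw [cs.wordProd_cons]
        refine ChainLE.trans cs (cs.chainLE_simple_mul_of_descent (by omega)) ?_
        exact ChainLE.trans cs hIH hstep

theorem bruhatLE_iff_chainLE {v w : W} : cs.BruhatLE v w ↔ cs.ChainLE v w := by
  constructor
  · rintro ⟨ω, hred, rfl, ω', hsub, rfl⟩
    exact cs.chainLE_of_sublist ω hred ω' hsub
  · intro h
    obtain ⟨τ, hτ, hπ⟩ := cs.exists_reduced_word' w
    obtain ⟨τ', hsub, hred', hπ'⟩ := cs.exists_sublist_of_chainLE h τ hτ hπ.symm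
    exact ⟨τ, hτ, hπ.symm, τ', hsub, hπ'⟩

theorem chainLE_length_lt {v w : W} (h : cs.ChainLE v w) (hne : v ≠ w) : ℓ v < ℓ w := by
  rcases Relation.ReflTransGen.cases_tail h with heq | ⟨y, hvy, hstep⟩
  · exact absurd heq.symm hne
  · obtain ⟨t, _, rfl, hlen⟩ := hstep
    have := cs.chainLE_length_le hvy
    omega

section Eulerian

variable [Fintype W]

open Classical in
private theorem eulerian_aux :
    ∀ n : ℕ, ∀ w v : W, ℓ w ≤ n → cs.ChainLE v w → v ≠ w →
      ∑ z ∈ Finset.univ.filter (fun z => cs.ChainLE v z ∧ cs.ChainLE z w),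
        (-1 : ℤ) ^ ℓ z = 0 := by
  intro n
  induction n using Nat.strong_induction_on with
  | _ n IH =>
    intro w v hwn hvw hne
    have hlv : ℓ v < ℓ w := cs.chainLE_length_lt hvw hne
    have hw1 : w ≠ 1 := by
      intro h
      rw [h, cs.length_one] at hlv
      omega
    obtain ⟨i, hd⟩ := cs.exists_leftDescent_of_ne_one hw1
    rw [IsLeftDescent] at hd
    have hpar : ∀ z : W, (-1 : ℤ) ^ ℓ (s i * z) = -(-1 : ℤ) ^ ℓ z := by
      intro z
      rcases cs.length_simple_mul z i with h1 | h1
      · rw [h1, pow_succ]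
        ring
      · rw [show ℓ z = ℓ (s i * z) + 1 by omega, pow_succ]
        ring
    rw [← Finset.sum_filter_add_sum_filter_not
      (Finset.univ.filter (fun z => cs.ChainLE v z ∧ cs.ChainLE z w))
      (fun z => cs.ChainLE v (s i * z)) (fun z => (-1 : ℤ) ^ ℓ z)]
    have hDzero : ∑ z ∈ (Finset.univ.filter (fun z => cs.ChainLE v z ∧ cs.ChainLE z w)).filter
        (fun z => cs.ChainLE v (s i * z)), (-1 : ℤ) ^ ℓ z = 0 := by
      apply Finset.sum_involution (g := fun z _ => s i * z)
      · intro a _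
        rw [hpar a]
        ring
      · intro a _ _
        intro heq
        exact cs.length_simple_mul_ne a i (by rw [heq])
      · intro a ha
        simp only [Finset.mem_filter, Finset.mem_univ, true_and] at ha ⊢
        obtain ⟨⟨hva, haw⟩, hQ⟩ := ha
        refine ⟨⟨hQ, cs.chainLE_simple_mul_left hd haw⟩, ?_⟩
        rw [cs.simple_mul_simple_cancel_left]
        exact hva
      · intro a _
        rw [cs.simple_mul_simple_cancel_left]
    rw [hDzero, zero_add]
    rcases cs.length_simple_mul v i with hvup | hvdown
    · -- Case A : s i * v > v ; the remaining set is empty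
      have hU : (Finset.univ.filter (fun z => cs.ChainLE v z ∧ cs.ChainLE z w)).filter
          (fun z => ¬ cs.ChainLE v (s i * z)) = ∅ := by
        rw [Finset.eq_empty_iff_forall_notMem]
        intro z hz
        simp only [Finset.mem_filter, Finset.mem_univ, true_and] at hz
        obtain ⟨⟨hvz, hzw⟩, hnot⟩ := hz
        rcases cs.length_simple_mul z i with h1 | h1
        · exact hnot (ChainLE.trans cs hvz (cs.chainLE_simple_mul_of_ascent (by omega)))
        · exact hnot (cs.chainLE_of_descent_of_ascent (by omega) hvz (by omega))
      rw [hU, Finset.sum_empty]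
    · -- Case B : s i * v < v
      have hsvw : cs.ChainLE (s i * v) (s i * w) :=
        cs.chainLE_of_descent_of_descent hd hvw (by omega)
      have hsvne : s i * v ≠ s i * w := fun h => hne (mul_left_cancel h)
      have hPzero : ∑ y ∈ Finset.univ.filter
          (fun y => cs.ChainLE (s i * v) y ∧ cs.ChainLE y (s i * w)), (-1 : ℤ) ^ ℓ y = 0 :=
        IH (ℓ (s i * w)) (by omega) (s i * w) (s i * v) le_rfl hsvw hsvne
      have hVzero : ∑ y ∈ Finset.univ.filter
          (fun y => cs.ChainLE v y ∧ cs.ChainLE y (s i * w)), (-1 : ℤ) ^ ℓ y = 0 := by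
        by_cases hvsw : cs.ChainLE v (s i * w)
        · have hne2 : v ≠ s i * w := by
            intro h
            rw [h, cs.simple_mul_simple_cancel_left] at hvdown
            omega
          exact IH (ℓ (s i * w)) (by omega) (s i * w) v le_rfl hvsw hne2
        · have hempty : Finset.univ.filter
              (fun y => cs.ChainLE v y ∧ cs.ChainLE y (s i * w)) = ∅ := by
            rw [Finset.eq_empty_iff_forall_notMem]
            intro y hy
            simp only [Finset.mem_filter, Finset.mem_univ, true_and] at hy
            exact hvsw (ChainLE.trans cs hy.1 hy.2)
          rw [hempty, Finset.sum_empty]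
      have hsplit := Finset.sum_filter_add_sum_filter_not
        (Finset.univ.filter (fun y => cs.ChainLE (s i * v) y ∧ cs.ChainLE y (s i * w)))
        (fun y => cs.ChainLE v y) (fun y => (-1 : ℤ) ^ ℓ y)
      have hPv : (Finset.univ.filter
            (fun y => cs.ChainLE (s i * v) y ∧ cs.ChainLE y (s i * w))).filter
            (fun y => cs.ChainLE v y)
          = Finset.univ.filter (fun y => cs.ChainLE v y ∧ cs.ChainLE y (s i * w)) := by
        ext y
        simp only [Finset.mem_filter, Finset.mem_univ, true_and]
        constructor
        · rintro ⟨⟨_, hysw⟩, hvy⟩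
          exact ⟨hvy, hysw⟩
        · rintro ⟨hvy, hysw⟩
          exact ⟨⟨ChainLE.trans cs (cs.chainLE_simple_mul_of_descent (by omega)) hvy, hysw⟩, hvy⟩
      rw [hPv, hVzero, hPzero] at hsplit
      have hTzero : ∑ y ∈ (Finset.univ.filter
          (fun y => cs.ChainLE (s i * v) y ∧ cs.ChainLE y (s i * w))).filter
          (fun y => ¬ cs.ChainLE v y), (-1 : ℤ) ^ ℓ y = 0 := by omega
      have hUT : ∑ z ∈ (Finset.univ.filter
            (fun z => cs.ChainLE v z ∧ cs.ChainLE z w)).filter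
            (fun z => ¬ cs.ChainLE v (s i * z)), (-1 : ℤ) ^ ℓ z
          = ∑ y ∈ (Finset.univ.filter
            (fun y => cs.ChainLE (s i * v) y ∧ cs.ChainLE y (s i * w))).filter
            (fun y => ¬ cs.ChainLE v y), (-(-1 : ℤ) ^ ℓ y) := by
        apply Finset.sum_bij' (i := fun z _ => s i * z) (j := fun y _ => s i * y)
        · -- maps U into T
          intro z hz
          simp only [Finset.mem_filter, Finset.mem_univ, true_and] at hz ⊢
          obtain ⟨⟨hvz, hzw⟩, hnot⟩ := hz
          have hdz : ℓ (s i * z) < ℓ z := by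
            rcases cs.length_simple_mul z i with h1 | h1
            · exact absurd (ChainLE.trans cs hvz
                (cs.chainLE_simple_mul_of_ascent (by omega))) hnot
            · omega
          exact ⟨⟨cs.chainLE_of_descent_of_descent hdz hvz (by omega),
            cs.chainLE_of_descent_of_descent hd hzw hdz⟩, hnot⟩
        · -- maps T into U
          intro y hy
          simp only [Finset.mem_filter, Finset.mem_univ, true_and] at hy ⊢
          obtain ⟨⟨hsvy, hysw⟩, hnvy⟩ := hy
          have hsv_asc : ℓ (s i * v) < ℓ (s i * (s i * v)) := by
            rw [cs.simple_mul_simple_cancel_left]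
            omega
          have hyasc : ℓ y < ℓ (s i * y) := by
            rcases cs.length_simple_mul y i with h1 | h1
            · omega
            · exfalso
              have ha1 : cs.ChainLE (s i * v) (s i * y) :=
                cs.chainLE_of_descent_of_ascent (by omega) hsvy (by omega)
              have hsy_asc : ℓ (s i * y) < ℓ (s i * (s i * y)) := by
                rw [cs.simple_mul_simple_cancel_left]
                omega
              have hm := cs.chainLE_mono hsy_asc ha1 hsv_asc
              rw [cs.simple_mul_simple_cancel_left, cs.simple_mul_simple_cancel_left] at hm
              exact hnvy hm
          have hvsy : cs.ChainLE v (s i * y) := by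
            have hm := cs.chainLE_mono hyasc hsvy hsv_asc
            rwa [cs.simple_mul_simple_cancel_left] at hm
          refine ⟨⟨hvsy, (cs.chainLE_of_le_sub hd hysw).2⟩, ?_⟩
          rw [cs.simple_mul_simple_cancel_left]
          exact hnvy
        · intro z _
          rw [cs.simple_mul_simple_cancel_left]
        · intro y _
          rw [cs.simple_mul_simple_cancel_left]
        · intro z _
          rw [hpar z]
          ring
      rw [hUT, Finset.sum_neg_distrib, hTzero, neg_zero]

end Eulerian

end CoxeterSystem

open Classical in
/-- Every Bruhat interval `[v, w]` of length at least one in a finite Coxeter group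
is Eulerian: the alternating sum `∑_{v ≤ z ≤ w} (-1)^{ℓ(z)}` vanishes, i.e. the
interval has equally many elements of even and odd length. -/
theorem bruhat_interval_eulerian {B W : Type*} [Group W] [Fintype W]
    {M : CoxeterMatrix B} (cs : CoxeterSystem M W) (v w : W)
    (hvw : cs.BruhatLT v w) :
    ∑ z ∈ Finset.univ.filter (fun z => cs.BruhatLE v z ∧ cs.BruhatLE z w),
      (-1 : ℤ) ^ cs.length z = 0 := by
  obtain ⟨hle, hne⟩ := hvw
  have hchain : cs.ChainLE v w := cs.bruhatLE_iff_chainLE.mp hle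
  have hfilter : Finset.univ.filter (fun z => cs.BruhatLE v z ∧ cs.BruhatLE z w)
      = Finset.univ.filter (fun z => cs.ChainLE v z ∧ cs.ChainLE z w) := by
    ext z
    simp only [Finset.mem_filter, Finset.mem_univ, true_and,
      cs.bruhatLE_iff_chainLE]
  rw [hfilter]
  exact cs.eulerian_aux (cs.length w) w v le_rfl hchain hne
end
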